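/- arXiv:1803.06394 — 5 statements merged into one kernel-verified Lean document; each statement's English description precedes it below -/
import Mathlib

section
/- For every positive integer n, the number of partitions of n in which exactly one part value appears exactly twice and all other part values appear exactly once equals the number of zeros appearing in the binary representations of the multiplicities of all parts over all partitions of n into odd parts. -/
open Finset Multiset

namespace C2B2


lemma mem_map_succ {l : List ℕ} {a : ℕ} : a + 1 ∈ l.map (· + 1) ↔ a ∈ l := by
  simp only [List.mem_map]
  constructor
  · rintro ⟨b, hb, hba⟩
    have : b = a := by omega
    exact this ▸ hb
  · exact fun h => ⟨a, h, rfl⟩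

/-- membership in bitIndices ↔ testBit -/
lemma mem_bitIndices {m a : ℕ} : a ∈ m.bitIndices ↔ m.testBit a = true := by
  induction m using Nat.strong_induction_on generalizing a with
  | _ m ih =>
    rcases Nat.eq_zero_or_pos m with rfl | hm
    · simp
    have h2 : m / 2 < m := Nat.div_lt_self hm (by norm_num)
    rcases Nat.even_or_odd m with he | ho
    · have hm2 : m = 2 * (m / 2) := by
        obtain ⟨k, hk⟩ := he; omega
      rw [hm2, Nat.bitIndices_two_mul]
      cases a with
      | zero =>
        rw [Nat.testBit_zero]
        simp only [List.mem_map]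
        constructor
        · rintro ⟨b, -, h⟩; omega
        · intro h
          simp only [decide_eq_true_eq, Nat.mul_mod_right] at h
          exact absurd h (by norm_num)
      | succ a =>
        rw [Nat.testBit_add_one, Nat.mul_div_cancel_left _ (by norm_num : 0 < 2),
          mem_map_succ]
        exact ih _ h2
    · have hm2 : m = 2 * (m / 2) + 1 := by
        obtain ⟨k, hk⟩ := ho; omega
      rw [hm2, Nat.bitIndices_two_mul_add_one]
      cases a with
      | zero =>
        rw [Nat.testBit_zero]
        simp only [List.mem_cons]
        constructor
        · intro _; simp only [decide_eq_true_eq]; omega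
        · intro _; left; trivial
      | succ a =>
        rw [Nat.testBit_add_one, Nat.mul_add_div (by norm_num : 0 < 2)]
        simp only [List.mem_cons, Nat.succ_ne_zero, false_or]
        rw [mem_map_succ]
        exact ih _ h2

/-- flipping: adding 2^j flips bit j -/
lemma testBit_add_pow {x j : ℕ} : (x + 2 ^ j).testBit j = !x.testBit j := by
  rw [Nat.testBit_eq_decide_div_mod_eq, Nat.testBit_eq_decide_div_mod_eq,
    Nat.add_div_right _ (Nat.two_pow_pos j)]
  rcases Nat.mod_two_eq_zero_or_one (x / 2 ^ j) with h | h <;>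
    simp [Nat.add_mod, h]

lemma testBit_sub_pow {m j : ℕ} (hj : 2 ^ j ≤ m) (h : m.testBit j = false) :
    (m - 2 ^ j).testBit j = true := by
  have := testBit_add_pow (x := m - 2 ^ j) (j := j)
  rw [Nat.sub_add_cancel hj, h] at this
  simpa using this.symm



lemma digits_len_eq_size (m : ℕ) : (Nat.digits 2 m).length = m.size := by
  rw [Nat.digits_two_eq_bits, List.length_map, Nat.size_eq_bits_len]

lemma count0_add_len (m : ℕ) :
    (Nat.digits 2 m).count 0 + m.bitIndices.length = (Nat.digits 2 m).length := by
  induction m using Nat.strong_induction_on with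
  | _ m ih =>
    rcases Nat.eq_zero_or_pos m with rfl | hm
    · simp
    have h2 : m / 2 < m := Nat.div_lt_self hm (by norm_num)
    rw [Nat.digits_def' (by norm_num : (1:ℕ) < 2) hm]
    rcases Nat.even_or_odd m with he | ho
    · have hm2 : m = 2 * (m / 2) := by obtain ⟨k, hk⟩ := he; omega
      have hb : m.bitIndices = (m / 2).bitIndices.map (· + 1) := by
        conv_lhs => rw [hm2]
        rw [Nat.bitIndices_two_mul]
      rw [hb, List.length_map, List.count_cons, List.length_cons]
      have hmod : m % 2 = 0 := by omega
      rw [hmod]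
      simp only [beq_self_eq_true, if_true]
      have := ih _ h2
      omega
    · have hm2 : m = 2 * (m / 2) + 1 := by obtain ⟨k, hk⟩ := ho; omega
      have hb : m.bitIndices = 0 :: (m / 2).bitIndices.map (· + 1) := by
        conv_lhs => rw [hm2]
        rw [Nat.bitIndices_two_mul_add_one]
      rw [hb, List.count_cons, List.length_cons, List.length_cons, List.length_map]
      have hmod : m % 2 = 1 := by omega
      rw [hmod]
      have := ih _ h2
      norm_num
      omega



/-- 2-adic valuation -/
def val2 (q : ℕ) : ℕ := q.factorization 2

/-- odd core -/
def core (q : ℕ) : ℕ := q / 2 ^ val2 q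

lemma val2_pw {k : ℕ} (hk : Odd k) (a : ℕ) : val2 (2 ^ a * k) = a := by
  have hk0 : k ≠ 0 := by rintro rfl; simp at hk
  rw [val2, Nat.factorization_mul (pow_ne_zero _ (by norm_num)) hk0]
  simp only [Finsupp.coe_add, Pi.add_apply, Nat.Prime.factorization_pow (by norm_num : Nat.Prime 2)]
  rw [Nat.factorization_eq_zero_of_not_dvd (by
    rw [Nat.two_dvd_ne_zero, Nat.odd_iff.mp hk])]
  simp

lemma core_pw {k : ℕ} (hk : Odd k) (a : ℕ) : core (2 ^ a * k) = k := by
  rw [core, val2_pw hk, Nat.mul_div_cancel_left _ (Nat.two_pow_pos a)]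

lemma pw_core (q : ℕ) : 2 ^ val2 q * core q = q := by
  rw [core, val2, Nat.mul_div_cancel' (Nat.ordProj_dvd q 2)]

lemma core_odd {q : ℕ} (hq : q ≠ 0) : Odd (core q) := by
  rw [Nat.odd_iff, ← Nat.two_dvd_ne_zero]
  exact Nat.not_dvd_ordCompl (by norm_num) hq

lemma core_pos {q : ℕ} (hq : 0 < q) : 0 < core q := by
  have h := pw_core q
  rcases Nat.eq_zero_or_pos (core q) with h0 | h0
  · rw [h0, mul_zero] at h; omega
  · exact h0



/-- marked zero-bit positions of m -/
def Js (m : ℕ) : Finset ℕ :=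
  (Finset.range m).filter (fun j => m.testBit j = false ∧ 2 ^ (j + 1) ≤ m)

lemma mem_Js {m j : ℕ} : j ∈ Js m ↔ m.testBit j = false ∧ 2 ^ (j + 1) ≤ m := by
  rw [Js, Finset.mem_filter, Finset.mem_range]
  constructor
  · tauto
  · intro h
    refine ⟨?_, h⟩
    have h1 : j < 2 ^ (j + 1) := (Nat.lt_two_pow_self (n := j)).trans (Nat.pow_lt_pow_succ (by norm_num))
    omega


lemma Js_eq (m : ℕ) :
    Js m = (Finset.range m.size).filter (fun j => j ∉ m.bitIndices) := by
  ext j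
  rw [mem_Js, Finset.mem_filter, Finset.mem_range, mem_bitIndices]
  constructor
  · rintro ⟨h1, h2⟩
    refine ⟨Nat.lt_size.mpr (le_trans (Nat.pow_le_pow_right (by norm_num) (by omega)) h2), by simp [h1]⟩
  · rintro ⟨h1, h2⟩
    have hb : m.testBit j = false := by
      revert h2; cases m.testBit j <;> simp
    refine ⟨hb, ?_⟩
    by_contra hc
    push_neg at hc
    have hle : 2 ^ j ≤ m := Nat.lt_size.mp h1
    have hp : (2:ℕ) ^ (j + 1) = 2 * 2 ^ j := by ring
    have : m / 2 ^ j = 1 := by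
      apply Nat.div_eq_of_lt_le <;> omega
    rw [Nat.testBit_eq_decide_div_mod_eq, this] at hb
    simp at hb


lemma card_Js (m : ℕ) : (Js m).card = (Nat.digits 2 m).count 0 := by
  have hsub : (Finset.range m.size).filter (fun j => j ∈ m.bitIndices) = m.bitIndices.toFinset := by
    ext j
    simp only [Finset.mem_filter, Finset.mem_range, List.mem_toFinset]
    exact ⟨fun h => h.2, fun h => ⟨Nat.lt_size.mpr (Nat.two_pow_le_of_mem_bitIndices h), h⟩⟩
  have hnd : m.bitIndices.Nodup := Nat.bitIndices_sorted.nodup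
  have hcard : ((Finset.range m.size).filter (fun j => j ∈ m.bitIndices)).card
      = m.bitIndices.length := by
    rw [hsub, List.toFinset_card_of_nodup hnd]
  have htot := Finset.card_filter_add_card_filter_not
    (s := Finset.range m.size) (p := fun j => j ∈ m.bitIndices)
  rw [Js_eq]
  have h1 := count0_add_len m
  have h2 := digits_len_eq_size m
  rw [Finset.card_range] at htot
  omega




/-! ### toOdd -/

def toOdd (s : Multiset ℕ) : Multiset ℕ :=
  s.bind (fun q => Multiset.replicate (2 ^ val2 q) (core q))

lemma toOdd_add (s t : Multiset ℕ) : toOdd (s + t) = toOdd s + toOdd t :=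
  Multiset.add_bind s t _

lemma toOdd_singleton (q : ℕ) : toOdd {q} = Multiset.replicate (2 ^ val2 q) (core q) :=
  Multiset.singleton_bind _ _

lemma toOdd_sum (s : Multiset ℕ) : (toOdd s).sum = s.sum := by
  rw [toOdd, Multiset.sum_bind]
  have : ∀ q : ℕ, (Multiset.replicate (2 ^ val2 q) (core q)).sum = q := by
    intro q
    rw [Multiset.sum_replicate, smul_eq_mul, pw_core]
  rw [Multiset.map_congr rfl (fun q _ => this q), Multiset.map_id']

lemma mem_toOdd {s : Multiset ℕ} {k : ℕ} (h : k ∈ toOdd s) :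
    ∃ q ∈ s, k = core q := by
  rw [toOdd, Multiset.mem_bind] at h
  obtain ⟨q, hq, hk⟩ := h
  exact ⟨q, hq, Multiset.eq_of_mem_replicate hk⟩

lemma toOdd_odd {s : Multiset ℕ} (hpos : ∀ q ∈ s, 0 < q) {k : ℕ} (h : k ∈ toOdd s) :
    Odd k := by
  obtain ⟨q, hq, rfl⟩ := mem_toOdd h
  have := hpos q hq
  exact core_odd (by omega)

lemma count_toOdd (s : Multiset ℕ) (k : ℕ) :
    (toOdd s).count k = (s.map (fun q => if core q = k then 2 ^ val2 q else 0)).sum := by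
  rw [toOdd, Multiset.count_bind]
  congr 1
  apply Multiset.map_congr rfl
  intro q _
  rw [Multiset.count_replicate]

/-! ### expandOne and fromOdd -/

def expandOne (k m : ℕ) : Multiset ℕ := ↑(m.bitIndices.map (fun a => 2 ^ a * k))

lemma expandOne_sum (k m : ℕ) : (expandOne k m).sum = m * k := by
  rw [expandOne, Multiset.sum_coe]
  rw [List.sum_map_mul_right m.bitIndices (fun a => 2 ^ a) k, Nat.twoPowSum_bitIndices]

lemma mem_expandOne {k m q : ℕ} (h : q ∈ expandOne k m) :
    ∃ a ∈ m.bitIndices, q = 2 ^ a * k := by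
  rw [expandOne, Multiset.mem_coe, List.mem_map] at h
  obtain ⟨a, ha, rfl⟩ := h
  exact ⟨a, ha, rfl⟩

lemma expandOne_nodup {k m : ℕ} (hk : 0 < k) : (expandOne k m).Nodup := by
  rw [expandOne, Multiset.coe_nodup]
  refine List.Nodup.map ?_ Nat.bitIndices_sorted.nodup
  intro a b hab
  have := Nat.pow_right_injective (le_refl 2) (Nat.eq_of_mul_eq_mul_right hk hab)
  exact this

lemma count_expandOne {k : ℕ} (hk : Odd k) (m q : ℕ) :
    (expandOne k m).count q = if core q = k ∧ val2 q ∈ m.bitIndices then 1 else 0 := by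
  have hk0 : 0 < k := hk.pos
  by_cases h : core q = k ∧ val2 q ∈ m.bitIndices
  · rw [if_pos h]
    apply Multiset.count_eq_one_of_mem (expandOne_nodup hk0)
    rw [expandOne, Multiset.mem_coe, List.mem_map]
    exact ⟨val2 q, h.2, by rw [← h.1, pw_core q]⟩
  · rw [if_neg h, Multiset.count_eq_zero]
    intro hq
    obtain ⟨a, ha, rfl⟩ := mem_expandOne hq
    exact h ⟨core_pw hk a, (val2_pw hk a).symm ▸ ha⟩

def toOddHom : Multiset ℕ →+ Multiset ℕ where
  toFun := toOdd
  map_zero' := rfl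
  map_add' := toOdd_add

def fromOdd (s : Multiset ℕ) : Multiset ℕ := ∑ k ∈ s.toFinset, expandOne k (s.count k)

lemma fromOdd_sum (s : Multiset ℕ) : (fromOdd s).sum = s.sum := by
  have h1 : (fromOdd s).sum = ∑ k ∈ s.toFinset, (expandOne k (s.count k)).sum :=
    map_sum Multiset.sumAddMonoidHom _ _
  rw [h1]
  have h2 : ∀ k ∈ s.toFinset, (expandOne k (s.count k)).sum = s.count k • k := by
    intro k _
    rw [expandOne_sum, smul_eq_mul]
  rw [Finset.sum_congr rfl h2]
  conv_rhs => rw [← Multiset.toFinset_sum_count_nsmul_eq s]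
  rw [show (∑ a ∈ s.toFinset, s.count a • ({a} : Multiset ℕ)).sum
      = ∑ a ∈ s.toFinset, (s.count a • ({a} : Multiset ℕ)).sum from
    map_sum Multiset.sumAddMonoidHom (fun k => s.count k • ({k} : Multiset ℕ)) s.toFinset]
  apply Finset.sum_congr rfl
  intro k _
  rw [Multiset.nsmul_singleton, Multiset.sum_replicate]


lemma fromOdd_mem {s : Multiset ℕ} {q : ℕ} (h : q ∈ fromOdd s) :
    ∃ k ∈ s, ∃ a, q = 2 ^ a * k := by
  rw [fromOdd] at h
  rw [Multiset.mem_sum] at h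
  obtain ⟨k, hk, hq⟩ := h
  obtain ⟨a, _, rfl⟩ := mem_expandOne hq
  exact ⟨k, Multiset.mem_toFinset.mp hk, a, rfl⟩

lemma count_fromOdd {s : Multiset ℕ} (hs : ∀ k ∈ s, Odd k) (q : ℕ) :
    (fromOdd s).count q = if val2 q ∈ (s.count (core q)).bitIndices then 1 else 0 := by
  rw [fromOdd, Multiset.count_sum']
  by_cases hc : core q ∈ s.toFinset
  · rw [Finset.sum_eq_single_of_mem (core q) hc]
    · rw [count_expandOne (hs _ (Multiset.mem_toFinset.mp hc))]
      simp
    · intro k hk hne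
      rw [count_expandOne (hs _ (Multiset.mem_toFinset.mp hk))]
      rw [if_neg]
      rintro ⟨h1, -⟩
      exact hne h1.symm
  · rw [Finset.sum_eq_zero, if_neg]
    · have h0 : s.count (core q) = 0 := by
        rw [Multiset.count_eq_zero]
        intro hmem
        exact hc (Multiset.mem_toFinset.mpr hmem)
      rw [h0]
      simp
    · intro k hk
      rw [count_expandOne (hs _ (Multiset.mem_toFinset.mp hk)), if_neg]
      rintro ⟨h1, -⟩
      exact hc (h1 ▸ hk)

lemma toOdd_expandOne {k : ℕ} (hk : Odd k) (m : ℕ) :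
    toOdd (expandOne k m) = Multiset.replicate m k := by
  ext k'
  rw [count_toOdd, Multiset.count_replicate, expandOne]
  rw [Multiset.map_coe, Multiset.sum_coe, List.map_map]
  have hfun : ∀ a : ℕ, ((fun q => if core q = k' then 2 ^ val2 q else 0) ∘ (fun a => 2 ^ a * k)) a
      = if k = k' then 2 ^ a else 0 := by
    intro a
    simp only [Function.comp_apply, core_pw hk, val2_pw hk]
  rw [List.map_congr_left (fun a _ => hfun a)]
  by_cases h : k = k'
  · subst h
    simp only [if_true]
    exact Nat.twoPowSum_bitIndices m
  · simp [h, Ne.symm h]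

lemma toOdd_fromOdd {s : Multiset ℕ} (hs : ∀ k ∈ s, Odd k) : toOdd (fromOdd s) = s := by
  rw [fromOdd]
  rw [show toOdd (∑ k ∈ s.toFinset, expandOne k (s.count k))
      = ∑ k ∈ s.toFinset, toOdd (expandOne k (s.count k)) from
    map_sum toOddHom (fun k => expandOne k (s.count k)) s.toFinset]
  conv_rhs => rw [← Multiset.toFinset_sum_count_nsmul_eq s]
  apply Finset.sum_congr rfl
  intro k hk
  rw [toOdd_expandOne (hs k (Multiset.mem_toFinset.mp hk)), Multiset.nsmul_singleton]

lemma count_toOdd_bits {u : Multiset ℕ} (hu : u.Nodup) (hpos : ∀ q ∈ u, 0 < q)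
    {k : ℕ} (hk : Odd k) (a : ℕ) :
    a ∈ ((toOdd u).count k).bitIndices ↔ 2 ^ a * k ∈ u := by
  classical
  set F : Finset ℕ := ⟨u, hu⟩ with hF
  set A : Finset ℕ := (Finset.range (u.sum + 1)).filter (fun a => 2 ^ a * k ∈ u) with hA
  have hmemA : ∀ b : ℕ, b ∈ A ↔ 2 ^ b * k ∈ u := by
    intro b
    rw [hA, Finset.mem_filter, Finset.mem_range]
    constructor
    · tauto
    · intro h
      refine ⟨?_, h⟩
      have h1 : 2 ^ b * k ≤ u.sum := Multiset.single_le_sum (fun x _ => Nat.zero_le x) _ h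
      have h2 : b < 2 ^ b := Nat.lt_two_pow_self (n := b)
      have h3 : 2 ^ b ≤ 2 ^ b * k := Nat.le_mul_of_pos_right _ hk.pos
      omega
  have hcount : (toOdd u).count k = ∑ b ∈ A, 2 ^ b := by
    rw [count_toOdd]
    have h1 : (u.map (fun q => if core q = k then 2 ^ val2 q else 0)).sum
        = ∑ q ∈ F, (if core q = k then 2 ^ val2 q else 0) := rfl
    rw [h1, ← Finset.sum_filter]
    refine Finset.sum_nbij' (i := val2) (j := fun b => 2 ^ b * k) ?_ ?_ ?_ ?_ ?_
    · intro q hq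
      rw [Finset.mem_filter, hF] at hq
      obtain ⟨hq1, hq2⟩ := hq
      rw [hmemA]
      have : (2:ℕ) ^ val2 q * k = q := by rw [← hq2, pw_core]
      rw [this]
      exact hq1
    · intro b hb
      rw [Finset.mem_filter, hF]
      exact ⟨(hmemA b).mp hb, core_pw hk b⟩
    · intro q hq
      rw [Finset.mem_filter] at hq
      show 2 ^ val2 q * k = q
      rw [← hq.2]
      exact pw_core q
    · intro b hb
      show val2 (2 ^ b * k) = b
      exact val2_pw hk b
    · intro q hq
      rfl
  have h2 : ((A.sort (· ≤ ·)).map (fun i => 2 ^ i)).sum = ∑ b ∈ A, 2 ^ b := by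
    rw [← Multiset.sum_coe, ← Multiset.map_coe, Finset.sort_eq]
    rfl
  rw [hcount, ← h2, Nat.bitIndices_sum_map_two_pow (Finset.sortedLT_sort A)]
  rw [Finset.mem_sort]
  exact hmemA a

lemma toOdd_pos {s : Multiset ℕ} (hpos : ∀ q ∈ s, 0 < q) {k : ℕ} (h : k ∈ toOdd s) :
    0 < k := by
  obtain ⟨q, hq, rfl⟩ := mem_toOdd h
  exact core_pos (hpos q hq)

lemma fromOdd_toOdd {u : Multiset ℕ} (hu : u.Nodup) (hpos : ∀ q ∈ u, 0 < q) :
    fromOdd (toOdd u) = u := by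
  have hodd : ∀ k ∈ toOdd u, Odd k := fun k h => toOdd_odd hpos h
  ext q
  rw [count_fromOdd hodd]
  rcases Nat.eq_zero_or_pos q with rfl | hq
  · have hc0 : core 0 = 0 := by simp [core, val2]
    have h0 : (toOdd u).count (core 0) = 0 := by
      rw [hc0, Multiset.count_eq_zero]
      intro hmem
      exact absurd (toOdd_pos hpos hmem) (by omega)
    rw [h0]
    have h0u : (0 : ℕ) ∉ u := fun hmem => absurd (hpos 0 hmem) (by omega)
    rw [Multiset.count_eq_zero.mpr h0u]
    simp
  · have hcq : Odd (core q) := core_odd (by omega)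
    have hbit := count_toOdd_bits hu hpos hcq (val2 q)
    rw [pw_core q] at hbit
    by_cases hqu : q ∈ u
    · rw [if_pos (hbit.mpr hqu), Multiset.count_eq_one_of_mem hu hqu]
    · rw [if_neg (fun h => hqu (hbit.mp h)), Multiset.count_eq_zero.mpr hqu]


/-! ### buildM : the image multiset of the bijection -/

def buildM (s : Multiset ℕ) (i j : ℕ) : Multiset ℕ :=
  fromOdd (s - Multiset.replicate (2 ^ j) i) + {2 ^ j * i}

section build
variable {s : Multiset ℕ} {i j : ℕ} (hodd : ∀ q ∈ s, Odd q)
  (hi : i ∈ s) (hj : j ∈ Js (s.count i))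

include hj in
lemma rep_le : Multiset.replicate (2 ^ j) i ≤ s := by
  rw [← Multiset.le_count_iff_replicate_le]
  have h := (mem_Js.mp hj).2
  have : (2:ℕ) ^ (j+1) = 2 * 2 ^ j := by ring
  omega

include hodd in
lemma sub_odd : ∀ q ∈ s - Multiset.replicate (2 ^ j) i, Odd q :=
  fun q hq => hodd q (Multiset.mem_of_le (Multiset.sub_le_self _ _) hq)

include hodd hi in
lemma oddi : Odd i := hodd i hi

include hodd hi hj in
lemma buildM_sum : (buildM s i j).sum = s.sum := by
  rw [buildM, Multiset.sum_add, fromOdd_sum, Multiset.sum_singleton]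
  have hle := rep_le hj
  have h1 : (s - Multiset.replicate (2 ^ j) i) + Multiset.replicate (2 ^ j) i = s :=
    tsub_add_cancel_of_le hle
  have h2 := congrArg Multiset.sum h1
  rw [Multiset.sum_add, Multiset.sum_replicate, smul_eq_mul] at h2
  omega

include hodd hi hj in
lemma buildM_pos : ∀ q ∈ buildM s i j, 0 < q := by
  intro q hq
  rw [buildM, Multiset.mem_add] at hq
  rcases hq with hq | hq
  · obtain ⟨k, hk, a, rfl⟩ := fromOdd_mem hq
    have := (sub_odd hodd k hk).pos
    positivity
  · rw [Multiset.mem_singleton] at hq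
    subst hq
    have := (oddi hodd hi).pos
    positivity

include hodd in
lemma buildM_count (q : ℕ) : (buildM s i j).count q =
    (if val2 q ∈ ((s - Multiset.replicate (2 ^ j) i).count (core q)).bitIndices then 1 else 0)
      + (if q = 2 ^ j * i then 1 else 0) := by
  rw [buildM, Multiset.count_add, count_fromOdd (sub_odd hodd), Multiset.count_singleton]

include hodd hi hj in
lemma buildM_count_p : (buildM s i j).count (2 ^ j * i) = 2 := by
  have hoi := oddi hodd hi
  rw [buildM_count hodd, if_pos rfl, val2_pw hoi, core_pw hoi]
  rw [Multiset.count_sub, Multiset.count_replicate, if_pos rfl]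
  obtain ⟨h1, h2⟩ := mem_Js.mp hj
  have h3 : (2:ℕ) ^ (j+1) = 2 * 2 ^ j := by ring
  rw [if_pos (mem_bitIndices.mpr (testBit_sub_pow (by omega) h1))]

include hodd in
lemma buildM_count_ne {q : ℕ} (hq : q ≠ 2 ^ j * i) : (buildM s i j).count q ≤ 1 := by
  rw [buildM_count hodd, if_neg hq]
  split <;> omega

include hodd hi hj in
lemma toOdd_buildM : toOdd (buildM s i j) = s := by
  rw [buildM, toOdd_add, toOdd_fromOdd (sub_odd hodd), toOdd_singleton]
  have hoi := oddi hodd hi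
  rw [val2_pw hoi, core_pw hoi]
  exact tsub_add_cancel_of_le (rep_le hj)

end build

lemma exists_build {u : Multiset ℕ} (hupos : ∀ q ∈ u, 0 < q) {p : ℕ} (hpmem : p ∈ u)
    (hp2 : u.count p = 2) (hp1 : ∀ q ∈ u, q ≠ p → u.count q = 1) :
    core p ∈ toOdd u ∧ val2 p ∈ Js ((toOdd u).count (core p))
      ∧ buildM (toOdd u) (core p) (val2 p) = u := by
  classical
  set i := core p with hi
  set j := val2 p with hj
  have hp0 : 0 < p := hupos p hpmem
  have hip : Odd i := core_odd (by omega)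
  set rest := u.erase p with hrest
  have hcons : p ::ₘ rest = u := Multiset.cons_erase hpmem
  have hueq : u = {p} + rest := by rw [Multiset.singleton_add, hcons]
  have hrest_nodup : rest.Nodup := by
    rw [Multiset.nodup_iff_count_le_one]
    intro q
    rcases eq_or_ne q p with rfl | hne
    · rw [hrest, Multiset.count_erase_self, hp2]
    · rw [hrest, Multiset.count_erase_of_ne hne]
      by_cases hqu : q ∈ u
      · rw [hp1 q hqu hne]
      · rw [Multiset.count_eq_zero.mpr hqu]; omega
  have hrest_pos : ∀ q ∈ rest, 0 < q := fun q hq => hupos q (Multiset.mem_of_mem_erase hq)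
  have hprest : p ∈ rest := by
    rw [← Multiset.count_pos, hrest, Multiset.count_erase_self, hp2]
    norm_num
  have htu : toOdd u = Multiset.replicate (2 ^ j) i + toOdd rest := by
    rw [hueq, toOdd_add, toOdd_singleton, ← hi, ← hj]
  set S := (toOdd rest).count i with hS
  have hbits : j ∈ S.bitIndices := by
    rw [hS]
    refine (count_toOdd_bits hrest_nodup hrest_pos hip j).mpr ?_
    rw [hj, hi, pw_core p]
    exact hprest
  have h2S : 2 ^ j ≤ S := Nat.two_pow_le_of_mem_bitIndices hbits
  have htS : S.testBit j = true := mem_bitIndices.mp hbits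
  have hm : (toOdd u).count i = S + 2 ^ j := by
    rw [htu, Multiset.count_add, Multiset.count_replicate, if_pos rfl, hS]
    omega
  have htm : ((toOdd u).count i).testBit j = false := by
    rw [hm, testBit_add_pow, htS]
    rfl
  have hm2 : 2 ^ (j + 1) ≤ (toOdd u).count i := by
    have : (2:ℕ) ^ (j + 1) = 2 ^ j * 2 := by ring
    omega
  refine ⟨?_, mem_Js.mpr ⟨htm, hm2⟩, ?_⟩
  · rw [← Multiset.count_pos, hm]
    positivity
  · rw [buildM]
    have hsub : toOdd u - Multiset.replicate (2 ^ j) i = toOdd rest := by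
      rw [htu, add_tsub_cancel_left]
    rw [hsub, fromOdd_toOdd hrest_nodup hrest_pos]
    have hpji : 2 ^ j * i = p := pw_core p
    rw [hpji, ← hcons]
    rw [← Multiset.singleton_add]
    rw [add_comm]

def buildP {n : ℕ} (P : n.Partition) (i j : ℕ) (hodd : ∀ q ∈ P.parts, Odd q)
    (hi : i ∈ P.parts) (hj : j ∈ Js (P.parts.count i)) : n.Partition where
  parts := buildM P.parts i j
  parts_pos := fun {q} hq => buildM_pos hodd hi hj q hq
  parts_sum := by rw [buildM_sum hodd hi hj, P.parts_sum]

lemma mem_odds_iff {n : ℕ} {P : n.Partition} :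
    P ∈ Nat.Partition.odds n ↔ ∀ q ∈ P.parts, Odd q := by
  rw [Nat.Partition.odds, Nat.Partition.restricted, Finset.mem_filter]
  simp only [Finset.mem_univ, true_and]
  constructor
  · intro h q hq
    exact Nat.not_even_iff_odd.mp (h q hq)
  · intro h q hq
    exact Nat.not_even_iff_odd.mpr (h q hq)

end C2B2

open Finset C2B2

theorem c2_eq_b2 (n : ℕ) (hn : 0 < n) :
    (Finset.univ.filter (fun P : n.Partition =>
        ∃ p ∈ P.parts.toFinset, P.parts.count p = 2 ∧
          ∀ q ∈ P.parts.toFinset, q ≠ p → P.parts.count q = 1)).card =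
      ∑ P ∈ Nat.Partition.odds n,
        ∑ i ∈ P.parts.toFinset, (Nat.digits 2 (P.parts.count i)).count 0 := by
  classical
  have hR : ∑ P ∈ Nat.Partition.odds n,
      ∑ i ∈ P.parts.toFinset, (Nat.digits 2 (P.parts.count i)).count 0
      = ((Nat.Partition.odds n).sigma
          (fun P => (P.parts.toFinset).sigma (fun i => Js (P.parts.count i)))).card := by
    rw [Finset.card_sigma]
    refine Finset.sum_congr rfl fun P _ => ?_
    rw [Finset.card_sigma]
    exact Finset.sum_congr rfl fun i _ => (card_Js _).symm
  rw [hR]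
  refine (Finset.card_bij
    (fun (x : Σ _ : n.Partition, Σ _ : ℕ, ℕ) hx => buildP x.1 x.2.1 x.2.2
      (mem_odds_iff.mp ((Finset.mem_sigma.mp hx).1))
      (Multiset.mem_toFinset.mp (Finset.mem_sigma.mp ((Finset.mem_sigma.mp hx).2)).1)
      ((Finset.mem_sigma.mp ((Finset.mem_sigma.mp hx).2)).2))
    ?_ ?_ ?_).symm
  · -- maps into the filter
    rintro ⟨P, i, j⟩ hx
    have h1 := mem_odds_iff.mp ((Finset.mem_sigma.mp hx).1)
    have h2 := Multiset.mem_toFinset.mp (Finset.mem_sigma.mp ((Finset.mem_sigma.mp hx).2)).1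
    have h3 := (Finset.mem_sigma.mp ((Finset.mem_sigma.mp hx).2)).2
    rw [Finset.mem_filter]
    refine ⟨Finset.mem_univ _, 2 ^ j * i, ?_, ?_, ?_⟩
    · rw [Multiset.mem_toFinset, ← Multiset.count_pos]
      show 0 < (buildM P.parts i j).count (2 ^ j * i)
      rw [buildM_count_p h1 h2 h3]
      norm_num
    · exact buildM_count_p h1 h2 h3
    · intro q hq hqne
      have hle : (buildM P.parts i j).count q ≤ 1 := buildM_count_ne h1 hqne
      have hpos : 0 < (buildM P.parts i j).count q := by
        rw [Multiset.count_pos]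
        exact Multiset.mem_toFinset.mp hq
      show (buildM P.parts i j).count q = 1
      omega
  · -- injective
    rintro ⟨P₁, i₁, j₁⟩ hx₁ ⟨P₂, i₂, j₂⟩ hx₂ heq
    have h11 := mem_odds_iff.mp ((Finset.mem_sigma.mp hx₁).1)
    have h12 := Multiset.mem_toFinset.mp (Finset.mem_sigma.mp ((Finset.mem_sigma.mp hx₁).2)).1
    have h13 := (Finset.mem_sigma.mp ((Finset.mem_sigma.mp hx₁).2)).2
    have h21 := mem_odds_iff.mp ((Finset.mem_sigma.mp hx₂).1)
    have h22 := Multiset.mem_toFinset.mp (Finset.mem_sigma.mp ((Finset.mem_sigma.mp hx₂).2)).1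
    have h23 := (Finset.mem_sigma.mp ((Finset.mem_sigma.mp hx₂).2)).2
    have hparts : buildM P₁.parts i₁ j₁ = buildM P₂.parts i₂ j₂ :=
      congrArg Nat.Partition.parts heq
    have hPP : P₁.parts = P₂.parts := by
      rw [← toOdd_buildM h11 h12 h13, ← toOdd_buildM h21 h22 h23, hparts]
    have hP : P₁ = P₂ := Nat.Partition.ext hPP
    have hpp : (2 : ℕ) ^ j₁ * i₁ = 2 ^ j₂ * i₂ := by
      by_contra hne
      have hc1 : (buildM P₂.parts i₂ j₂).count (2 ^ j₁ * i₁) = 2 := by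
        rw [← hparts]
        exact buildM_count_p h11 h12 h13
      have hc2 : (buildM P₂.parts i₂ j₂).count (2 ^ j₁ * i₁) ≤ 1 :=
        buildM_count_ne h21 hne
      omega
    have hoi₁ : Odd i₁ := h11 i₁ h12
    have hoi₂ : Odd i₂ := h21 i₂ h22
    have hii : i₁ = i₂ := by
      have := congrArg core hpp
      rwa [core_pw hoi₁, core_pw hoi₂] at this
    have hjj : j₁ = j₂ := by
      have := congrArg val2 hpp
      rwa [val2_pw hoi₁, val2_pw hoi₂] at this
    subst hii; subst hjj
    cases hP
    rfl
  · -- surjective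
    intro b hb
    rw [Finset.mem_filter] at hb
    obtain ⟨-, p, hpmem, hp2, hp1⟩ := hb
    have hupos : ∀ q ∈ b.parts, 0 < q := fun q hq => b.parts_pos hq
    have hpmem' : p ∈ b.parts := Multiset.mem_toFinset.mp hpmem
    have hp1' : ∀ q ∈ b.parts, q ≠ p → b.parts.count q = 1 :=
      fun q hq hqne => hp1 q (Multiset.mem_toFinset.mpr hq) hqne
    obtain ⟨hmem, hJ, hbuild⟩ := exists_build hupos hpmem' hp2 hp1'
    have hPodd : ∀ q ∈ toOdd b.parts, Odd q := fun q hq => toOdd_odd hupos hq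
    refine ⟨⟨⟨toOdd b.parts, fun {q} hq => toOdd_pos hupos hq, by
      rw [toOdd_sum, b.parts_sum]⟩, core p, val2 p⟩, ?_, ?_⟩
    · rw [Finset.mem_sigma]
      refine ⟨mem_odds_iff.mpr hPodd, ?_⟩
      rw [Finset.mem_sigma]
      exact ⟨Multiset.mem_toFinset.mpr hmem, hJ⟩
    · apply Nat.Partition.ext
      exact hbuild
end

section
/- For every positive integer n, b2(n), defined as the sum over all odd partitions λ of n and all part values i of λ of (⌊log₂ m_i⌋ + 1), minus the total number of parts over all distinct-part partitions of n, equals the number of zeros in the binary representations of all multiplicities m_i over all odd partitions of n. -/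
open Finset

namespace B2Aux

/-- The finset of positions of 1-bits in the binary representation of `m`. -/
def oneBits (m : ℕ) : Finset ℕ := (Finset.range m).filter fun j => m.testBit j

lemma mem_oneBits {m j : ℕ} : j ∈ oneBits m ↔ m.testBit j = true := by
  constructor
  · intro h; exact (Finset.mem_filter.1 h).2
  · intro h
    exact Finset.mem_filter.2
      ⟨Finset.mem_range.2 (lt_of_lt_of_le (Nat.lt_two_pow_self (n := j)) (Nat.ge_two_pow_of_testBit h)), h⟩

lemma sum_range_two_pow (a : ℕ) : ∑ j ∈ Finset.range a, 2 ^ j = 2 ^ a - 1 := by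
  induction a with
  | zero => simp
  | succ a ih =>
    rw [Finset.sum_range_succ, ih]
    have h1 : 1 ≤ 2 ^ a := Nat.one_le_two_pow
    have h2 : 2 ^ (a + 1) = 2 ^ a * 2 := pow_succ 2 a
    omega

lemma testBit_sum_two_pow (S : Finset ℕ) (k : ℕ) :
    (∑ j ∈ S, 2 ^ j).testBit k = decide (k ∈ S) := by
  induction S using Finset.induction_on_max with
  | empty => simp
  | insert a S ha ih =>
    have haS : a ∉ S := fun h => lt_irrefl a (ha a h)
    rw [Finset.sum_insert haS]
    have hs : (∑ j ∈ S, 2 ^ j) < 2 ^ a := by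
      have hsub : S ⊆ Finset.range a := fun x hx => Finset.mem_range.2 (ha x hx)
      have h0 : (∑ j ∈ S, 2 ^ j) ≤ ∑ j ∈ Finset.range a, 2 ^ j :=
        Finset.sum_le_sum_of_subset hsub
      rw [sum_range_two_pow] at h0
      have h1 : 1 ≤ 2 ^ a := Nat.one_le_two_pow
      omega
    rcases lt_trichotomy k a with hk | rfl | hk
    · rw [Nat.testBit_two_pow_add_gt hk, ih]
      have hne : k ≠ a := hk.ne
      simp [Finset.mem_insert, hne]
    · rw [Nat.testBit_two_pow_add_eq]
      rw [Nat.testBit_eq_false_of_lt hs]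
      simp
    · have hlt2 : 2 ^ a + (∑ j ∈ S, 2 ^ j) < 2 ^ k := by
        have : 2 ^ (a + 1) ≤ 2 ^ k := Nat.pow_le_pow_right (by norm_num) hk
        have h2 : 2 ^ (a + 1) = 2 ^ a * 2 := pow_succ 2 a
        omega
      rw [Nat.testBit_eq_false_of_lt hlt2]
      have : k ∉ insert a S := by
        simp only [Finset.mem_insert]
        rintro (rfl | h)
        · exact lt_irrefl k hk
        · exact lt_irrefl k (lt_trans (ha k h) hk)
      simp [this]

lemma oneBits_sum_two_pow (S : Finset ℕ) : oneBits (∑ j ∈ S, 2 ^ j) = S := by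
  ext k
  rw [mem_oneBits, testBit_sum_two_pow]
  simp

lemma sum_oneBits (m : ℕ) : ∑ j ∈ oneBits m, 2 ^ j = m := by
  apply Nat.eq_of_testBit_eq
  intro k
  rw [testBit_sum_two_pow]
  by_cases h : m.testBit k = true
  · simp [h, mem_oneBits.2 h]
  · have : k ∉ oneBits m := fun hc => h (mem_oneBits.1 hc)
    simp only [Bool.not_eq_true] at h
    simp [h, this]

lemma card_oneBits (m : ℕ) : (oneBits m).card = (Nat.digits 2 m).count 1 := by
  induction m using Nat.strong_induction_on with
  | _ m ih =>
  rcases Nat.eq_zero_or_pos m with rfl | h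
  · simp [oneBits]
  · have hm2 : m / 2 < m := Nat.div_lt_self h one_lt_two
    rw [Nat.digits_def' one_lt_two h]
    have key : oneBits m =
        ((oneBits (m / 2)).image (· + 1)) ∪ (if m % 2 = 1 then {0} else ∅) := by
      ext k
      cases k with
      | zero =>
        rw [Finset.mem_union, Finset.mem_image, mem_oneBits, Nat.testBit_zero]
        constructor
        · intro hk
          right
          rw [decide_eq_true_eq] at hk
          simp [hk]
        · rintro (⟨j, _, hj⟩ | hk)
          · exact absurd hj (by omega)
          · by_cases h1 : m % 2 = 1
            · simp [h1]
            · simp [h1] at hk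
      | succ k =>
        rw [Finset.mem_union, Finset.mem_image, mem_oneBits, Nat.testBit_add_one]
        constructor
        · intro hk
          exact Or.inl ⟨k, mem_oneBits.2 hk, rfl⟩
        · rintro (⟨j, hj, hjk⟩ | hk)
          · have hjk' : j = k := by omega
            subst hjk'
            exact mem_oneBits.1 hj
          · exfalso
            by_cases h1 : m % 2 = 1 <;> simp [h1] at hk
    rw [key, Finset.card_union_of_disjoint, Finset.card_image_of_injective _
        (fun a b hab => by omega), ih _ hm2, List.count_cons]
    · by_cases h1 : m % 2 = 1 <;> simp [h1]
    · rw [Finset.disjoint_right]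
      intro x hx
      by_cases h1 : m % 2 = 1 <;> simp [h1] at hx ⊢
      subst hx
      simp

lemma count_zero_add_count_one (l : List ℕ) (hl : ∀ x ∈ l, x < 2) :
    l.count 0 + l.count 1 = l.length := by
  induction l with
  | nil => simp
  | cons a l ih =>
    have ha : a < 2 := hl a (by simp)
    have hl' : ∀ x ∈ l, x < 2 := fun x hx => hl x (by simp [hx])
    rw [List.count_cons, List.count_cons, List.length_cons, ← ih hl']
    interval_cases a <;> simp <;> omega

lemma log_add_one_eq (m : ℕ) (hm : m ≠ 0) :
    Nat.log 2 m + 1 = (Nat.digits 2 m).count 0 + (oneBits m).card := by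
  rw [card_oneBits, count_zero_add_count_one _ (fun x hx => Nat.digits_lt_base one_lt_two hx),
    Nat.digits_len 2 m one_lt_two hm]

lemma odd_mul_two_pow_le {i i' j j' : ℕ} (hi : ¬Even i) (hjj : j ≤ j')
    (h : i * 2 ^ j = i' * 2 ^ j') : i = i' ∧ j = j' := by
  have h2 : 2 ^ j' = 2 ^ j * 2 ^ (j' - j) := by
    rw [← pow_add]; congr 1; omega
  have hi0 : i = i' * 2 ^ (j' - j) := by
    have hp : 0 < 2 ^ j := pow_pos (by norm_num) j
    apply Nat.eq_of_mul_eq_mul_right hp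
    rw [h, h2]; ring
  by_cases hd : j' - j = 0
  · rw [hi0, hd, pow_zero, mul_one]
    exact ⟨rfl, by omega⟩
  · exfalso
    apply hi
    obtain ⟨d, hd'⟩ : ∃ d, j' - j = d + 1 := ⟨j' - j - 1, by omega⟩
    refine ⟨i' * 2 ^ d, ?_⟩
    rw [hi0, hd', pow_succ]
    ring

lemma odd_mul_two_pow_inj {i i' j j' : ℕ} (hi : ¬Even i) (hi' : ¬Even i')
    (h : i * 2 ^ j = i' * 2 ^ j') : i = i' ∧ j = j' := by
  rcases le_total j j' with hjj | hjj
  · exact odd_mul_two_pow_le hi hjj h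
  · obtain ⟨h1, h2⟩ := odd_mul_two_pow_le hi' hjj h.symm
    exact ⟨h1.symm, h2.symm⟩

lemma multiset_sum_finset_sum {α : Type*} (s : Finset α) (f : α → Multiset ℕ) :
    (∑ i ∈ s, f i).sum = ∑ i ∈ s, (f i).sum :=
  map_sum Multiset.sumAddMonoidHom f s

lemma multiset_card_finset_sum {α β : Type*} (s : Finset α) (f : α → Multiset β) :
    Multiset.card (∑ i ∈ s, f i) = ∑ i ∈ s, Multiset.card (f i) :=
  map_sum (⟨⟨Multiset.card, Multiset.card_zero⟩, Multiset.card_add⟩ : Multiset β →+ ℕ) f s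

lemma multiset_map_finset_sum {α β γ : Type*} (s : Finset α) (f : α → Multiset β) (g : β → γ) :
    (∑ i ∈ s, f i).map g = ∑ i ∈ s, (f i).map g :=
  map_sum (Multiset.mapAddMonoidHom g) f s

/-- The Glaisher map from (odd) partitions to (distinct) partitions. -/
def glaisher {n : ℕ} (P : n.Partition) : n.Partition where
  parts := ∑ i ∈ P.parts.toFinset, ((oneBits (P.parts.count i)).val.map fun j => i * 2 ^ j)
  parts_pos := by
    intro x hx
    rw [Multiset.mem_sum] at hx
    obtain ⟨i, hi, hx⟩ := hx
    obtain ⟨j, _, rfl⟩ := Multiset.mem_map.1 hx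
    exact Nat.mul_pos (P.parts_pos (Multiset.mem_toFinset.1 hi)) (pow_pos (by norm_num) j)
  parts_sum := by
    rw [multiset_sum_finset_sum]
    have h1 : ∀ i ∈ P.parts.toFinset,
        ((oneBits (P.parts.count i)).val.map fun j => i * 2 ^ j).sum = P.parts.count i • i := by
      intro i _
      have : ((oneBits (P.parts.count i)).val.map fun j => i * 2 ^ j).sum
          = ∑ j ∈ oneBits (P.parts.count i), i * 2 ^ j := rfl
      rw [this, ← Finset.mul_sum, sum_oneBits, smul_eq_mul, mul_comm]
    rw [Finset.sum_congr rfl h1, ← Finset.sum_multiset_count, P.parts_sum]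

lemma mem_glaisher_parts {n : ℕ} {P : n.Partition} {x : ℕ} :
    x ∈ (glaisher P).parts ↔
      ∃ i ∈ P.parts, ∃ j, (P.parts.count i).testBit j = true ∧ x = i * 2 ^ j := by
  show x ∈ ∑ i ∈ P.parts.toFinset, _ ↔ _
  rw [Multiset.mem_sum]
  constructor
  · rintro ⟨i, hi, hx⟩
    obtain ⟨j, hj, rfl⟩ := Multiset.mem_map.1 hx
    exact ⟨i, Multiset.mem_toFinset.1 hi, j, mem_oneBits.1 hj, rfl⟩
  · rintro ⟨i, hi, j, hj, rfl⟩
    exact ⟨i, Multiset.mem_toFinset.2 hi, Multiset.mem_map.2 ⟨j, mem_oneBits.2 hj, rfl⟩⟩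

lemma count_glaisher {n : ℕ} (P : n.Partition) (hP : ∀ i ∈ P.parts, ¬Even i)
    {i : ℕ} (hi : ¬Even i) (j : ℕ) :
    (glaisher P).parts.count (i * 2 ^ j) =
      if (P.parts.count i).testBit j then 1 else 0 := by
  show Multiset.count _ (∑ i ∈ P.parts.toFinset, _) = _
  rw [Multiset.count_sum']
  rw [Finset.sum_eq_single i]
  · have hipos : 0 < i := by
      rcases Nat.eq_zero_or_pos i with rfl | h
      · exact absurd Even.zero hi
      · exact h
    have hfinj : Function.Injective fun j' : ℕ => i * 2 ^ j' := by
      intro a b hab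
      simp only at hab
      exact Nat.pow_right_injective (le_refl 2) (Nat.eq_of_mul_eq_mul_left hipos hab)
    rw [Multiset.count_map_eq_count' _ _ hfinj]
    by_cases hj : (P.parts.count i).testBit j
    · rw [if_pos hj, Multiset.count_eq_one_of_mem (Finset.nodup _)
        (Finset.mem_def.1 (mem_oneBits.2 hj))]
    · rw [if_neg hj, Multiset.count_eq_zero_of_notMem]
      intro hc
      exact hj (mem_oneBits.1 (Finset.mem_def.2 hc))
  · intro i' hi' hne
    apply Multiset.count_eq_zero_of_notMem
    intro hmem
    obtain ⟨j', _, hj'⟩ := Multiset.mem_map.1 hmem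
    obtain ⟨h1, _⟩ := odd_mul_two_pow_inj (hP i' (Multiset.mem_toFinset.1 hi')) hi hj'
    exact hne h1
  · intro hmem
    have hc : P.parts.count i = 0 :=
      Multiset.count_eq_zero_of_notMem (fun h => hmem (Multiset.mem_toFinset.2 h))
    rw [hc]
    have h0 : oneBits 0 = ∅ := by simp [oneBits]
    rw [h0]
    simp

lemma card_glaisher {n : ℕ} (P : n.Partition) :
    Multiset.card (glaisher P).parts = ∑ i ∈ P.parts.toFinset, (oneBits (P.parts.count i)).card := by
  show Multiset.card (∑ i ∈ P.parts.toFinset, _) = _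
  rw [multiset_card_finset_sum]
  refine Finset.sum_congr rfl fun i _ => ?_
  rw [Multiset.card_map]
  rfl

/-- The inverse Glaisher map. -/
def deglaisher {n : ℕ} (Q : n.Partition) : n.Partition where
  parts := Q.parts.bind fun k => Multiset.replicate (2 ^ (k.factorization 2)) (ordCompl[2] k)
  parts_pos := by
    intro x hx
    rw [Multiset.mem_bind] at hx
    obtain ⟨k, hk, hx⟩ := hx
    rw [Multiset.eq_of_mem_replicate hx]
    exact Nat.ordCompl_pos 2 (Q.parts_pos hk).ne'
  parts_sum := by
    rw [Multiset.sum_bind]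
    have : ∀ k ∈ Q.parts,
        (Multiset.replicate (2 ^ (k.factorization 2)) (ordCompl[2] k)).sum = k := by
      intro k hk
      rw [Multiset.sum_replicate, smul_eq_mul, Nat.ordProj_mul_ordCompl_eq_self]
    rw [Multiset.map_congr rfl this, Multiset.map_id', Q.parts_sum]

lemma not_even_of_mem_deglaisher {n : ℕ} {Q : n.Partition} {x : ℕ}
    (hx : x ∈ (deglaisher Q).parts) : ¬Even x := by
  have hx' : x ∈ Q.parts.bind fun k =>
      Multiset.replicate (2 ^ (k.factorization 2)) (ordCompl[2] k) := hx
  rw [Multiset.mem_bind] at hx'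
  obtain ⟨k, hk, hx'⟩ := hx'
  rw [Multiset.eq_of_mem_replicate hx']
  intro hev
  exact Nat.not_dvd_ordCompl Nat.prime_two (Q.parts_pos hk).ne' hev.two_dvd

lemma factorization_odd_mul_two_pow {i : ℕ} (hi : ¬Even i) (j : ℕ) :
    (i * 2 ^ j).factorization 2 = j ∧ ordCompl[2] (i * 2 ^ j) = i := by
  have hi0 : i ≠ 0 := by rintro rfl; exact hi Even.zero
  have h2 : ¬ (2 ∣ i) := fun h => hi (even_iff_two_dvd.2 h)
  have hfac : (i * 2 ^ j).factorization 2 = j := by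
    rw [Nat.factorization_mul hi0 (pow_ne_zero j two_ne_zero),
      Nat.Prime.factorization_pow Nat.prime_two]
    simp [Nat.factorization_eq_zero_of_not_dvd h2]
  refine ⟨hfac, ?_⟩
  rw [hfac, Nat.mul_div_cancel _ (pow_pos (by norm_num) j)]

lemma odds_mem_iff {n : ℕ} {P : n.Partition} :
    P ∈ Nat.Partition.odds n ↔ ∀ i ∈ P.parts, ¬Even i := by
  simp [Nat.Partition.odds, Nat.Partition.restricted]

lemma distincts_mem_iff {n : ℕ} {P : n.Partition} :
    P ∈ Nat.Partition.distincts n ↔ P.parts.Nodup := by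
  simp [Nat.Partition.distincts]

lemma glaisher_mem_distincts {n : ℕ} (P : n.Partition) (hP : P ∈ Nat.Partition.odds n) :
    glaisher P ∈ Nat.Partition.distincts n := by
  rw [odds_mem_iff] at hP
  rw [distincts_mem_iff, Multiset.nodup_iff_count_le_one]
  intro a
  by_cases ha : a ∈ (glaisher P).parts
  · obtain ⟨i, hi, j, _, rfl⟩ := mem_glaisher_parts.1 ha
    rw [count_glaisher P hP (hP i hi) j]
    split <;> omega
  · rw [Multiset.count_eq_zero_of_notMem ha]
    omega

lemma deglaisher_mem_odds {n : ℕ} (Q : n.Partition) :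
    deglaisher Q ∈ Nat.Partition.odds n := by
  rw [odds_mem_iff]
  exact fun i hi => not_even_of_mem_deglaisher hi

lemma deglaisher_glaisher {n : ℕ} (P : n.Partition) (hP : P ∈ Nat.Partition.odds n) :
    deglaisher (glaisher P) = P := by
  rw [odds_mem_iff] at hP
  ext1
  apply Multiset.ext.2
  intro a
  have key : (deglaisher (glaisher P)).parts.count a =
      ∑ i ∈ P.parts.toFinset, ∑ j ∈ oneBits (P.parts.count i),
        (if i = a then 2 ^ j else 0) := by
    show Multiset.count a (Multiset.bind
        (∑ i ∈ P.parts.toFinset, ((oneBits (P.parts.count i)).val.map fun j => i * 2 ^ j))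
        fun k => Multiset.replicate (2 ^ (k.factorization 2)) (ordCompl[2] k)) = _
    rw [Multiset.count_bind, multiset_map_finset_sum, multiset_sum_finset_sum]
    refine Finset.sum_congr rfl fun i hi => ?_
    rw [Multiset.map_map]
    have : ((oneBits (P.parts.count i)).val.map
        ((fun k => Multiset.count a
            (Multiset.replicate (2 ^ (k.factorization 2)) (ordCompl[2] k)))
          ∘ fun j => i * 2 ^ j)).sum
        = ∑ j ∈ oneBits (P.parts.count i),
            Multiset.count a (Multiset.replicate (2 ^ ((i * 2 ^ j).factorization 2))
              (ordCompl[2] (i * 2 ^ j))) := rfl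
    rw [this]
    refine Finset.sum_congr rfl fun j hj => ?_
    obtain ⟨h1, h2⟩ := factorization_odd_mul_two_pow (hP i (Multiset.mem_toFinset.1 hi)) j
    rw [h2, h1, Multiset.count_replicate]
  rw [key]
  by_cases ha : ¬Even a
  · by_cases hmem : a ∈ P.parts.toFinset
    · rw [Finset.sum_eq_single_of_mem a hmem
        (fun i _ hne => Finset.sum_eq_zero fun j _ => if_neg hne)]
      have : ∀ j ∈ oneBits (P.parts.count a), (if a = a then 2 ^ j else 0) = 2 ^ j :=
        fun j _ => if_pos rfl
      rw [Finset.sum_congr rfl this, sum_oneBits]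
    · have h0 : ∀ i ∈ P.parts.toFinset, ∑ j ∈ oneBits (P.parts.count i),
          (if i = a then 2 ^ j else 0) = 0 := by
        intro i hi
        refine Finset.sum_eq_zero fun j _ => if_neg ?_
        rintro rfl
        exact hmem hi
      rw [Finset.sum_eq_zero h0,
        Multiset.count_eq_zero_of_notMem (fun h => hmem (Multiset.mem_toFinset.2 h))]
  · push_neg at ha
    have h0 : ∀ i ∈ P.parts.toFinset, ∑ j ∈ oneBits (P.parts.count i),
        (if i = a then 2 ^ j else 0) = 0 := by
      intro i hi
      refine Finset.sum_eq_zero fun j _ => if_neg ?_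
      rintro rfl
      exact (hP i (Multiset.mem_toFinset.1 hi)) ha
    rw [Finset.sum_eq_zero h0, Multiset.count_eq_zero_of_notMem]
    intro hmem
    exact (hP a hmem) ha

lemma glaisher_deglaisher {n : ℕ} (Q : n.Partition) (hQ : Q ∈ Nat.Partition.distincts n) :
    glaisher (deglaisher Q) = Q := by
  rw [distincts_mem_iff] at hQ
  set R := deglaisher Q with hR
  have hRodd : ∀ i ∈ R.parts, ¬Even i := fun i hi => not_even_of_mem_deglaisher hi
  set F : Finset ℕ := ⟨Q.parts, hQ⟩ with hF
  have hFm : ∀ x : ℕ, x ∈ F ↔ x ∈ Q.parts := fun x => Iff.rfl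
  have hcount : ∀ i : ℕ,
      R.parts.count i = ∑ k ∈ F.filter (fun k => ordCompl[2] k = i), 2 ^ (k.factorization 2) := by
    intro i
    show Multiset.count i (Q.parts.bind fun k =>
      Multiset.replicate (2 ^ (k.factorization 2)) (ordCompl[2] k)) = _
    rw [Multiset.count_bind]
    have h1 : (Q.parts.map fun k =>
        Multiset.count i (Multiset.replicate (2 ^ k.factorization 2) (ordCompl[2] k))).sum
        = ∑ k ∈ F, Multiset.count i (Multiset.replicate (2 ^ k.factorization 2) (ordCompl[2] k)) :=
      rfl
    rw [h1, Finset.sum_filter]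
    refine Finset.sum_congr rfl fun k hk => ?_
    rw [Multiset.count_replicate]
  have hbits : ∀ i : ℕ, oneBits (R.parts.count i)
      = (F.filter (fun k => ordCompl[2] k = i)).image (fun k => k.factorization 2) := by
    intro i
    have hinj : ∀ k ∈ F.filter (fun k => ordCompl[2] k = i),
        ∀ k' ∈ F.filter (fun k => ordCompl[2] k = i),
        k.factorization 2 = k'.factorization 2 → k = k' := by
      intro k hk k' hk' hkk
      rw [Finset.mem_filter] at hk hk'
      have e1 : k = 2 ^ (k.factorization 2) * i := by
        conv_lhs => rw [← Nat.ordProj_mul_ordCompl_eq_self k 2]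
        rw [hk.2]
      have e2 : k' = 2 ^ (k'.factorization 2) * i := by
        conv_lhs => rw [← Nat.ordProj_mul_ordCompl_eq_self k' 2]
        rw [hk'.2]
      rw [e1, e2, hkk]
    rw [hcount i, ← Finset.sum_image hinj, oneBits_sum_two_pow]
  ext1
  apply Multiset.ext.2
  intro a
  have hcQ : Q.parts.count a = if a ∈ F then 1 else 0 := by
    by_cases h : a ∈ F
    · rw [if_pos h]
      exact Multiset.count_eq_one_of_mem hQ ((hFm a).1 h)
    · rw [if_neg h]
      exact Multiset.count_eq_zero_of_notMem (fun hc => h ((hFm a).2 hc))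
  by_cases ha : a = 0
  · subst ha
    rw [hcQ]
    have h1 : (0:ℕ) ∉ F := fun h => (Q.parts_pos ((hFm 0).1 h)).ne' rfl
    rw [if_neg h1]
    exact Multiset.count_eq_zero_of_notMem
      (fun h => ((glaisher R).parts_pos h).ne' rfl)
  · set i := ordCompl[2] a with hidef
    set j := a.factorization 2 with hjdef
    have hi : ¬Even i := fun hev => Nat.not_dvd_ordCompl Nat.prime_two ha hev.two_dvd
    have haij : a = i * 2 ^ j := by
      rw [mul_comm]
      exact (Nat.ordProj_mul_ordCompl_eq_self a 2).symm
    rw [hcQ, haij, count_glaisher R hRodd hi j]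
    have hmemiff : (R.parts.count i).testBit j = true ↔ a ∈ F := by
      rw [← mem_oneBits, hbits i, Finset.mem_image]
      constructor
      · rintro ⟨k, hk, hkj⟩
        rw [Finset.mem_filter] at hk
        have hka : k = a := by
          rw [haij, ← hk.2, ← hkj, mul_comm]
          exact (Nat.ordProj_mul_ordCompl_eq_self k 2).symm
        rw [← hka]
        exact hk.1
      · intro hmem
        exact ⟨a, Finset.mem_filter.2 ⟨hmem, rfl⟩, rfl⟩
    by_cases h : a ∈ F
    · rw [if_pos (hmemiff.2 h), ← haij, if_pos h]
    · rw [if_neg (fun hb => h (hmemiff.1 hb)), ← haij, if_neg h]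

lemma key_identity (n : ℕ) :
    ∑ P ∈ Nat.Partition.odds n,
        ∑ i ∈ P.parts.toFinset, ((oneBits (P.parts.count i)).card : ℤ)
      = ∑ Q ∈ Nat.Partition.distincts n, (Multiset.card Q.parts : ℤ) := by
  refine Finset.sum_nbij' (i := glaisher) (j := deglaisher)
    (fun P hP => glaisher_mem_distincts P hP) (fun Q _ => deglaisher_mem_odds Q)
    (fun P hP => deglaisher_glaisher P hP) (fun Q hQ => glaisher_deglaisher Q hQ) ?_
  intro P hP
  rw [card_glaisher P]
  push_cast
  rfl

end B2Aux

theorem b2_eq_number_of_zeros (n : ℕ) (hn : 0 < n) :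
    (∑ P ∈ Nat.Partition.odds n,
        ∑ i ∈ P.parts.toFinset, ((Nat.log 2 (P.parts.count i) + 1 : ℕ) : ℤ)) -
        (∑ P ∈ Nat.Partition.distincts n, (Multiset.card P.parts : ℤ)) =
      ∑ P ∈ Nat.Partition.odds n,
        ∑ i ∈ P.parts.toFinset, (((Nat.digits 2 (P.parts.count i)).count 0 : ℕ) : ℤ) := by
  rw [← B2Aux.key_identity n, ← Finset.sum_sub_distrib]
  refine Finset.sum_congr rfl fun P _ => ?_
  rw [← Finset.sum_sub_distrib]
  refine Finset.sum_congr rfl fun i hi => ?_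
  have hm : P.parts.count i ≠ 0 := Multiset.count_ne_zero.2 (Multiset.mem_toFinset.1 hi)
  have h := B2Aux.log_add_one_eq (P.parts.count i) hm
  rw [h]
  push_cast
  ring
end

section
/- For every positive integer n, the total number of parts over all partitions of n into distinct parts equals the total number of 1's in the binary representations of the multiplicities of all part values over all partitions of n into odd parts. -/
open Finset

namespace GlaisherProof

open Multiset

/-- The number of 1s among binary digits equals the length of `bitIndices`. -/
lemma count_one_digits_eq_length (m : ℕ) :
    (Nat.digits 2 m).count 1 = m.bitIndices.length := by
  induction m using Nat.strong_induction_on with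
  | _ m ih =>
    rcases Nat.eq_zero_or_pos m with rfl | hm
    · simp
    have hdl : m / 2 < m := Nat.div_lt_self hm one_lt_two
    have hrec := ih _ hdl
    rw [Nat.digits_def' (by norm_num : 1 < 2) hm]
    rcases Nat.mod_two_eq_zero_or_one m with h | h
    · have hm2 : m = 2 * (m / 2) := by omega
      rw [h, show m.bitIndices = (2 * (m / 2)).bitIndices by rw [← hm2],
        Nat.bitIndices_two_mul, List.length_map, ← hrec]
      simp
    · have hm2 : m = 2 * (m / 2) + 1 := by omega
      rw [h, show m.bitIndices = (2 * (m / 2) + 1).bitIndices by rw [← hm2],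
        Nat.bitIndices_two_mul_add_one]
      simp [hrec]

lemma factorization_odd_mul_pow {i : ℕ} (k : ℕ) (hi : ¬ 2 ∣ i) (hi0 : i ≠ 0) :
    (i * 2 ^ k).factorization 2 = k := by
  rw [Nat.factorization_mul hi0 (pow_ne_zero k two_ne_zero)]
  simp [Nat.factorization_eq_zero_of_not_dvd hi,
    Nat.Prime.factorization_pow Nat.prime_two]

lemma ordCompl_odd_mul_pow {i : ℕ} (k : ℕ) (hi : ¬ 2 ∣ i) (hi0 : i ≠ 0) :
    ordCompl[2] (i * 2 ^ k) = i := by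
  rw [factorization_odd_mul_pow k hi hi0]
  exact Nat.mul_div_cancel _ (pow_pos two_pos k)

lemma odd_mul_pow_inj {i j k l : ℕ} (hi : ¬ 2 ∣ i) (hi0 : i ≠ 0) (hj : ¬ 2 ∣ j) (hj0 : j ≠ 0)
    (h : i * 2 ^ k = j * 2 ^ l) : i = j ∧ k = l := by
  have hk : k = l := by
    have h1 := factorization_odd_mul_pow k hi hi0
    rw [h, factorization_odd_mul_pow l hj hj0] at h1
    omega
  subst hk
  refine ⟨?_, rfl⟩
  exact Nat.eq_of_mul_eq_mul_right (pow_pos two_pos k) h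

/-- Glaisher's map from odd partitions to distinct partitions. -/
def phi {n : ℕ} (P : n.Partition) : n.Partition where
  parts := P.parts.toFinset.val.bind fun i =>
    ((P.parts.count i).bitIndices : Multiset ℕ).map fun k => i * 2 ^ k
  parts_pos := by
    intro p hp
    rw [Multiset.mem_bind] at hp
    obtain ⟨i, hi, hp⟩ := hp
    obtain ⟨k, _, rfl⟩ := Multiset.mem_map.mp hp
    exact Nat.mul_pos (P.parts_pos (Multiset.mem_toFinset.mp hi)) (pow_pos two_pos k)
  parts_sum := by
    rw [Multiset.sum_bind]
    have h1 : ∀ i : ℕ,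
        (((P.parts.count i).bitIndices : Multiset ℕ).map fun k => i * 2 ^ k).sum
          = i * P.parts.count i := by
      intro i
      rw [Multiset.map_coe, Multiset.sum_coe, List.sum_map_mul_left,
        Nat.twoPowSum_bitIndices]
    rw [Multiset.map_congr rfl fun i _ => h1 i]
    show ∑ i ∈ P.parts.toFinset, i * P.parts.count i = n
    have hs : ∑ i ∈ P.parts.toFinset, i * P.parts.count i = P.parts.sum := by
      conv_rhs => rw [← Multiset.map_id P.parts]
      rw [Finset.sum_multiset_map_count]
      simp [mul_comm]
    rw [hs, P.parts_sum]

/-- Glaisher's map from distinct partitions to odd partitions. -/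
def psi {n : ℕ} (Q : n.Partition) : n.Partition where
  parts := Q.parts.bind fun p => Multiset.replicate (2 ^ p.factorization 2) (ordCompl[2] p)
  parts_pos := by
    intro i hi
    rw [Multiset.mem_bind] at hi
    obtain ⟨p, hp, hi⟩ := hi
    rw [Multiset.eq_of_mem_replicate hi]
    exact Nat.ordCompl_pos 2 (Q.parts_pos hp).ne'
  parts_sum := by
    rw [Multiset.sum_bind]
    have h1 : ∀ p ∈ Q.parts,
        (Multiset.replicate (2 ^ p.factorization 2) (ordCompl[2] p)).sum = p := by
      intro p _
      rw [Multiset.sum_replicate, smul_eq_mul, Nat.ordProj_mul_ordCompl_eq_self]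
    rw [Multiset.map_congr rfl h1, Multiset.map_id']
    exact Q.parts_sum

lemma psi_mem_odds {n : ℕ} (Q : n.Partition) : psi Q ∈ Nat.Partition.odds n := by
  simp only [Nat.Partition.odds, Nat.Partition.restricted, Finset.mem_filter, Finset.mem_univ, true_and]
  intro i hi
  obtain ⟨p, hp, hmem⟩ := Multiset.mem_bind.mp hi
  rw [Multiset.eq_of_mem_replicate hmem]
  intro he
  exact Nat.not_dvd_ordCompl Nat.prime_two (Q.parts_pos hp).ne' he.two_dvd

lemma phi_mem_distincts {n : ℕ} (P : n.Partition) (hP : ∀ p ∈ P.parts, ¬ Even p) :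
    phi P ∈ Nat.Partition.distincts n := by
  simp only [Nat.Partition.distincts, Finset.mem_filter, Finset.mem_univ, true_and]
  show ((P.parts.toFinset.val.bind fun i =>
    ((P.parts.count i).bitIndices : Multiset ℕ).map fun k => i * 2 ^ k)).Nodup
  have hodd : ∀ i ∈ P.parts.toFinset.val, ¬ 2 ∣ i := by
    intro i hi hdvd
    exact hP i (Multiset.mem_toFinset.mp hi) (even_iff_two_dvd.mpr hdvd)
  have hpos : ∀ i ∈ P.parts.toFinset.val, i ≠ 0 := fun i hi =>
    (P.parts_pos (Multiset.mem_toFinset.mp hi)).ne'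
  rw [Multiset.nodup_bind]
  constructor
  · intro i hi
    have hnd : ((P.parts.count i).bitIndices : Multiset ℕ).Nodup :=
      Multiset.coe_nodup.mpr Nat.bitIndices_sorted.nodup
    refine hnd.map ?_
    intro a b hab
    have h := Nat.eq_of_mul_eq_mul_left (Nat.pos_of_ne_zero (hpos i hi)) hab
    exact Nat.pow_right_injective (le_refl 2) h
  · refine Multiset.Nodup.pairwise ?_ P.parts.toFinset.nodup
    intro i hi j hj hij
    rw [Function.onFun, Multiset.disjoint_left]
    rintro a ha hb
    obtain ⟨k, _, rfl⟩ := Multiset.mem_map.mp ha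
    obtain ⟨l, _, hkl⟩ := Multiset.mem_map.mp hb
    exact hij ((odd_mul_pow_inj (hodd i hi) (hpos i hi) (hodd j hj) (hpos j hj)
      hkl.symm).1)

lemma bind_eq_finset_sum {α β : Type*} (s : Finset α) (f : α → Multiset β) :
    s.val.bind f = ∑ a ∈ s, f a := by
  show s.val.bind f = (s.val.map f).sum
  induction s.val using Multiset.induction_on with
  | empty => simp
  | cons a t ih => simp [ih]

lemma bind_replicate_pow (s : Multiset ℕ) (i : ℕ) :
    (s.bind fun k => Multiset.replicate (2 ^ k) i)
      = Multiset.replicate ((s.map fun k => 2 ^ k).sum) i := by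
  induction s using Multiset.induction_on with
  | empty => simp
  | cons a t ih => simp [ih, Multiset.replicate_add]

lemma psi_phi {n : ℕ} (P : n.Partition) (hP : ∀ p ∈ P.parts, ¬ Even p) :
    psi (phi P) = P := by
  apply Nat.Partition.ext
  show ((P.parts.toFinset.val.bind fun i =>
      ((P.parts.count i).bitIndices : Multiset ℕ).map fun k => i * 2 ^ k).bind
        fun p => Multiset.replicate (2 ^ p.factorization 2) (ordCompl[2] p)) = P.parts
  rw [Multiset.bind_assoc]
  have h1 : ∀ i ∈ P.parts.toFinset.val,
      ((((P.parts.count i).bitIndices : Multiset ℕ).map fun k => i * 2 ^ k).bind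
        fun p => Multiset.replicate (2 ^ p.factorization 2) (ordCompl[2] p))
      = Multiset.replicate (P.parts.count i) i := by
    intro i hi
    have hi0 : i ≠ 0 := (P.parts_pos (Multiset.mem_toFinset.mp hi)).ne'
    have hiodd : ¬ 2 ∣ i := fun hdvd =>
      hP i (Multiset.mem_toFinset.mp hi) (even_iff_two_dvd.mpr hdvd)
    rw [Multiset.bind_map]
    have h2 : ∀ k ∈ ((P.parts.count i).bitIndices : Multiset ℕ),
        Multiset.replicate (2 ^ (i * 2 ^ k).factorization 2) (ordCompl[2] (i * 2 ^ k))
          = Multiset.replicate (2 ^ k) i := by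
      intro k _
      rw [factorization_odd_mul_pow k hiodd hi0, Nat.mul_div_cancel _ (pow_pos two_pos k)]
    rw [Multiset.bind_congr h2, bind_replicate_pow, Multiset.map_coe, Multiset.sum_coe,
      Nat.twoPowSum_bitIndices]
  rw [Multiset.bind_congr h1]
  have : ∀ i ∈ P.parts.toFinset.val,
      Multiset.replicate (P.parts.count i) i = P.parts.count i • ({i} : Multiset ℕ) := by
    intro i _
    rw [Multiset.nsmul_singleton]
  rw [Multiset.bind_congr this, bind_eq_finset_sum]
  exact Multiset.toFinset_sum_count_nsmul_eq P.parts

lemma sum_map_ite {α : Type*} (s : Multiset α) (q : α → Prop) [DecidablePred q] (f : α → ℕ) :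
    (s.map fun a => if q a then f a else 0).sum = ((s.filter q).map f).sum := by
  induction s using Multiset.induction_on with
  | empty => simp
  | cons a t ih =>
    by_cases h : q a <;> simp [h, ih, Multiset.filter_cons_of_pos, Multiset.filter_cons_of_neg]

/-- The key bit-level claim for the inverse direction. -/
lemma phi_psi_key {n : ℕ} (Q : n.Partition) (hQ : Q.parts.Nodup) (i : ℕ) :
    (((psi Q).parts.count i).bitIndices : Multiset ℕ).map (fun k => i * 2 ^ k)
      = Q.parts.filter (fun p => ordCompl[2] p = i) := by
  have hcount : (psi Q).parts.count i
      = ((Q.parts.filter fun p => ordCompl[2] p = i).map fun p => 2 ^ p.factorization 2).sum := by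
    show (Q.parts.bind fun p =>
      Multiset.replicate (2 ^ p.factorization 2) (ordCompl[2] p)).count i = _
    rw [Multiset.count_bind]
    rw [Multiset.map_congr rfl (fun p _ => Multiset.count_replicate i (ordCompl[2] p) _)]
    exact sum_map_ite Q.parts (fun p => ordCompl[2] p = i) fun p => 2 ^ p.factorization 2
  have hself : ∀ p ∈ Q.parts.filter (fun p => ordCompl[2] p = i),
      i * 2 ^ p.factorization 2 = p := by
    intro p hp
    rw [Multiset.mem_filter] at hp
    rw [← hp.2, mul_comm, Nat.ordProj_mul_ordCompl_eq_self]
  have hnd : ((Q.parts.filter fun p => ordCompl[2] p = i).map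
      fun p => p.factorization 2).Nodup := by
    refine (hQ.filter _).map_on ?_
    intro p hp q hq hpq
    have := hself p hp
    rw [hpq, hself q hq] at this
    exact this.symm
  set F : Finset ℕ := ⟨_, hnd⟩ with hF
  have hL : List.Pairwise (· < ·) (F.sort (· ≤ ·)) := F.sortedLT_sort.pairwise
  have hLsum : (((F.sort (· ≤ ·)).map fun k => 2 ^ k).sum) = (psi Q).parts.count i := by
    rw [hcount]
    have : ((F.sort (· ≤ ·) : List ℕ) : Multiset ℕ) = F.val := Finset.sort_eq F _
    calc ((F.sort (· ≤ ·)).map fun k => 2 ^ k).sum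
        = ((((F.sort (· ≤ ·) : List ℕ) : Multiset ℕ)).map fun k => 2 ^ k).sum := by
          rw [Multiset.map_coe, Multiset.sum_coe]
      _ = ((F.val).map fun k => 2 ^ k).sum := by rw [this]
      _ = _ := by
          show ((((Q.parts.filter fun p => ordCompl[2] p = i).map
            fun p => p.factorization 2)).map fun k => 2 ^ k).sum = _
          rw [Multiset.map_map]
          rfl
  have hbit : ((psi Q).parts.count i).bitIndices = F.sort (· ≤ ·) := by
    rw [← hLsum]
    exact Nat.bitIndices_twoPowsum hL.sortedLT
  rw [hbit, show ((F.sort (· ≤ ·) : List ℕ) : Multiset ℕ) = F.val from Finset.sort_eq F _]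
  show (((Q.parts.filter fun p => ordCompl[2] p = i).map
      fun p => p.factorization 2)).map (fun k => i * 2 ^ k) = _
  rw [Multiset.map_map]
  calc ((Q.parts.filter fun p => ordCompl[2] p = i).map
        ((fun k => i * 2 ^ k) ∘ fun p => p.factorization 2))
      = (Q.parts.filter fun p => ordCompl[2] p = i).map id := by
        exact Multiset.map_congr rfl fun p hp => hself p hp
    _ = _ := Multiset.map_id _

lemma phi_psi {n : ℕ} (Q : n.Partition) (hQ : Q.parts.Nodup) : phi (psi Q) = Q := by
  apply Nat.Partition.ext
  show ((psi Q).parts.toFinset.val.bind fun i =>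
    (((psi Q).parts.count i).bitIndices : Multiset ℕ).map fun k => i * 2 ^ k) = Q.parts
  rw [Multiset.bind_congr fun i _ => phi_psi_key Q hQ i]
  ext a
  rw [Multiset.count_bind]
  rw [Multiset.map_congr rfl fun i _ => (Multiset.count_filter :
    Multiset.count a (Q.parts.filter fun p => ordCompl[2] p = i) = _)]
  show (∑ i ∈ (psi Q).parts.toFinset,
    if ordCompl[2] a = i then Q.parts.count a else 0) = Q.parts.count a
  rw [Finset.sum_ite_eq]
  by_cases ha : a ∈ Q.parts
  · have : ordCompl[2] a ∈ (psi Q).parts.toFinset := by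
      rw [Multiset.mem_toFinset]
      refine Multiset.mem_bind.mpr ⟨a, ha, ?_⟩
      exact Multiset.mem_replicate.mpr ⟨pow_ne_zero _ two_ne_zero, rfl⟩
    rw [if_pos this]
  · rw [Multiset.count_eq_zero_of_notMem ha]
    simp

lemma card_phi {n : ℕ} (P : n.Partition) :
    Multiset.card (phi P).parts
      = ∑ i ∈ P.parts.toFinset, (Nat.digits 2 (P.parts.count i)).count 1 := by
  show Multiset.card (P.parts.toFinset.val.bind fun i =>
    ((P.parts.count i).bitIndices : Multiset ℕ).map fun k => i * 2 ^ k) = _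
  rw [Multiset.card_bind]
  show ∑ i ∈ P.parts.toFinset, Multiset.card
    (((P.parts.count i).bitIndices : Multiset ℕ).map fun k => i * 2 ^ k) = _
  refine Finset.sum_congr rfl fun i _ => ?_
  rw [Multiset.card_map, Multiset.coe_card, count_one_digits_eq_length]

end GlaisherProof

theorem distinct_parts_eq_binary_ones (n : ℕ) (hn : 0 < n) :
    ∑ P ∈ Nat.Partition.distincts n, Multiset.card P.parts =
      ∑ P ∈ Nat.Partition.odds n,
        ∑ i ∈ P.parts.toFinset, (Nat.digits 2 (P.parts.count i)).count 1 := by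
  have hdist : ∀ Q ∈ Nat.Partition.distincts n, Q.parts.Nodup := by
    intro Q hQ
    simpa [Nat.Partition.distincts] using hQ
  have hodds : ∀ P ∈ Nat.Partition.odds n, ∀ p ∈ P.parts, ¬ Even p := by
    intro P hP
    simpa [Nat.Partition.odds, Nat.Partition.restricted] using hP
  refine Finset.sum_nbij' GlaisherProof.psi GlaisherProof.phi
    (fun Q _ => GlaisherProof.psi_mem_odds Q)
    (fun P hP => GlaisherProof.phi_mem_distincts P (hodds P hP))
    (fun Q hQ => GlaisherProof.phi_psi Q (hdist Q hQ))
    (fun P hP => GlaisherProof.psi_phi P (hodds P hP))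
    (fun Q hQ => ?_)
  conv_lhs => rw [← GlaisherProof.phi_psi Q (hdist Q hQ)]
  exact GlaisherProof.card_phi (GlaisherProof.psi Q)
end

section
/- Glaisher's map, which sends a partition of n into odd parts to the partition of n into distinct parts whose parts are the numbers 2^j·m where m is odd and the binary representation of the multiplicity of m has a 1 in position j, is a bijection from the set of partitions of n into odd parts onto the set of partitions of n into distinct parts, and the number of parts of λ is always greater than or equal to the number of parts of its image. -/
open Finset

/-- Glaisher's map on the multiset of parts: for each odd part value `m` with
multiplicity `c`, produce a part `2^j * m` for each position `j` holding a `1`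
in the binary representation of `c`. -/
def glaisherParts (s : Multiset ℕ) : Multiset ℕ :=
  s.toFinset.val.bind fun m =>
    ((Finset.range (s.count m + 1)).filter fun j => (s.count m).testBit j).val.map
      fun j => 2 ^ j * m

namespace GlaisherAux

lemma testBit_iff_mem_bitIndices {c j : ℕ} : c.testBit j ↔ j ∈ c.bitIndices := by
  induction c using Nat.binaryRec generalizing j with
  | zero => simp
  | bit b n ih =>
    exact Nat.mem_bitIndices.symm

lemma two_pow_le_of_testBit {c j : ℕ} (h : c.testBit j) : 2 ^ j ≤ c :=
  Nat.two_pow_le_of_mem_bitIndices (testBit_iff_mem_bitIndices.mp h)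

lemma pow_mul_odd_inj {j k m m' : ℕ} (hm : Odd m) (hm' : Odd m')
    (h : 2 ^ j * m = 2 ^ k * m') : j = k ∧ m = m' := by
  have hm0 : m ≠ 0 := by rintro rfl; simp at hm
  have hm'0 : m' ≠ 0 := by rintro rfl; simp at hm'
  have h2m : ¬ (2 ∣ m) := by rw [← even_iff_two_dvd]; exact (Nat.not_even_iff_odd).mpr hm
  have h2m' : ¬ (2 ∣ m') := by rw [← even_iff_two_dvd]; exact (Nat.not_even_iff_odd).mpr hm'
  have hv : j = k := by
    have t1 : padicValNat 2 (2 ^ j * m) = j := by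
      rw [padicValNat.mul (by positivity) hm0, padicValNat.prime_pow,
        padicValNat.eq_zero_of_not_dvd h2m, add_zero]
    have t2 : padicValNat 2 (2 ^ k * m') = k := by
      rw [padicValNat.mul (by positivity) hm'0, padicValNat.prime_pow,
        padicValNat.eq_zero_of_not_dvd h2m', add_zero]
    rw [← t1, ← t2, h]
  subst hv
  exact ⟨rfl, Nat.eq_of_mul_eq_mul_left (by positivity) h⟩

lemma filter_range_val (c : ℕ) :
    ((Finset.range (c + 1)).filter fun j => c.testBit j).val
      = (↑c.bitIndices : Multiset ℕ) := by
  rw [Multiset.Nodup.ext ((Finset.filter _ _).nodup)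
    (Multiset.coe_nodup.mpr Nat.bitIndices_sorted.nodup)]
  intro a
  simp only [Finset.mem_val, Finset.mem_filter, Finset.mem_range, Multiset.mem_coe,
    ← testBit_iff_mem_bitIndices]
  constructor
  · tauto
  · intro h
    refine ⟨?_, h⟩
    have h1 := two_pow_le_of_testBit h
    have h2 := Nat.lt_two_pow_self (n := a)
    omega

lemma glaisherParts_eq (s : Multiset ℕ) :
    glaisherParts s
      = s.toFinset.val.bind fun m =>
        (↑((s.count m).bitIndices.map fun j => 2 ^ j * m) : Multiset ℕ) := by
  unfold glaisherParts
  congr 1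
  funext m
  rw [filter_range_val, Multiset.map_coe]

lemma mem_glaisherParts {s : Multiset ℕ} (hs : ∀ x ∈ s, Odd x) {j m : ℕ} (hm : Odd m) :
    2 ^ j * m ∈ glaisherParts s ↔ (s.count m).testBit j := by
  rw [glaisherParts_eq, Multiset.mem_bind]
  constructor
  · rintro ⟨m', hm', hmem⟩
    rw [Multiset.mem_coe, List.mem_map] at hmem
    obtain ⟨j', hj', heq⟩ := hmem
    have hm'odd : Odd m' := hs m' (Multiset.mem_toFinset.mp hm')
    obtain ⟨rfl, rfl⟩ := pow_mul_odd_inj hm'odd hm heq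
    exact testBit_iff_mem_bitIndices.mpr hj'
  · intro h
    have hc : 0 < s.count m := by
      have h1 := two_pow_le_of_testBit h
      have h2 := Nat.two_pow_pos j
      omega
    refine ⟨m, Multiset.mem_toFinset.mpr (Multiset.count_pos.mp hc), ?_⟩
    rw [Multiset.mem_coe, List.mem_map]
    exact ⟨j, testBit_iff_mem_bitIndices.mp h, rfl⟩

lemma pos_of_mem_glaisherParts {s : Multiset ℕ} (hpos : ∀ x ∈ s, 0 < x)
    {q : ℕ} (hq : q ∈ glaisherParts s) : 0 < q := by
  rw [glaisherParts_eq, Multiset.mem_bind] at hq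
  obtain ⟨m, hm, hmem⟩ := hq
  rw [Multiset.mem_coe, List.mem_map] at hmem
  obtain ⟨j, _, rfl⟩ := hmem
  have := hpos m (Multiset.mem_toFinset.mp hm)
  positivity

lemma nodup_glaisherParts {s : Multiset ℕ} (hs : ∀ x ∈ s, Odd x) :
    (glaisherParts s).Nodup := by
  rw [glaisherParts_eq, Multiset.nodup_bind]
  constructor
  · intro m hm
    have hmodd : Odd m := hs m (Multiset.mem_toFinset.mp hm)
    have hm0 : m ≠ 0 := by rintro rfl; simp at hmodd
    rw [Multiset.coe_nodup]
    refine List.Nodup.map ?_ Nat.bitIndices_sorted.nodup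
    intro a b hab
    have h2 : (2:ℕ) ^ a = 2 ^ b :=
      Nat.eq_of_mul_eq_mul_right (Nat.pos_of_ne_zero hm0) hab
    exact Nat.pow_right_injective (by norm_num) h2
  · refine Multiset.Nodup.pairwise ?_ s.toFinset.nodup
    intro a ha b hb hab
    have haodd : Odd a := hs a (Multiset.mem_toFinset.mp ha)
    have hbodd : Odd b := hs b (Multiset.mem_toFinset.mp hb)
    simp only [Function.onFun]
    rw [Multiset.disjoint_iff_ne]
    rintro x hx y hy rfl
    rw [Multiset.mem_coe, List.mem_map] at hx hy
    obtain ⟨j, _, rfl⟩ := hx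
    obtain ⟨k, _, heq⟩ := hy
    exact hab ((pow_mul_odd_inj hbodd haodd heq).2).symm

lemma sum_glaisherParts (s : Multiset ℕ) : (glaisherParts s).sum = s.sum := by
  rw [glaisherParts_eq, Multiset.sum_bind]
  have hstep : ∀ m : ℕ,
      ((↑((s.count m).bitIndices.map fun j => 2 ^ j * m) : Multiset ℕ)).sum
        = s.count m * m := by
    intro m
    rw [Multiset.sum_coe, List.sum_map_mul_right, Nat.twoPowSum_bitIndices]
  calc (s.toFinset.val.map fun m =>
        ((↑((s.count m).bitIndices.map fun j => 2 ^ j * m) : Multiset ℕ)).sum).sum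
      = ∑ m ∈ s.toFinset, s.count m * m := by
        rw [Finset.sum]
        exact congrArg Multiset.sum (Multiset.map_congr rfl fun m _ => hstep m)
    _ = s.sum := by
        conv_rhs => rw [show s.sum = (s.map id).sum by rw [Multiset.map_id]]
        rw [Finset.sum_multiset_map_count]
        simp [smul_eq_mul]

lemma card_glaisherParts_le (s : Multiset ℕ) :
    Multiset.card (glaisherParts s) ≤ Multiset.card s := by
  rw [glaisherParts_eq, Multiset.card_bind]
  have hstep : ∀ c : ℕ, c.bitIndices.length ≤ c := by
    intro c
    have h1 : (c.bitIndices.map fun i => 2 ^ i).length ≤ (c.bitIndices.map fun i => 2 ^ i).sum :=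
      List.length_le_sum_of_one_le _ (by
        intro i hi
        rw [List.mem_map] at hi
        obtain ⟨j, _, rfl⟩ := hi
        exact Nat.one_le_two_pow)
    rwa [List.length_map, Nat.twoPowSum_bitIndices] at h1
  calc (s.toFinset.val.map
          (Multiset.card ∘ fun m =>
            (↑((s.count m).bitIndices.map fun j => 2 ^ j * m) : Multiset ℕ))).sum
      = ∑ m ∈ s.toFinset, ((s.count m).bitIndices.map fun j => 2 ^ j * m).length := by
        rw [Finset.sum]
        exact congrArg Multiset.sum
          (Multiset.map_congr rfl fun m _ => by simp [Multiset.coe_card])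
    _ ≤ ∑ m ∈ s.toFinset, s.count m := by
        refine Finset.sum_le_sum fun m _ => ?_
        rw [List.length_map]; exact hstep _
    _ = Multiset.card s := Multiset.toFinset_sum_count_eq s

/-- Inverse of Glaisher's map on parts. -/
def invParts (t : Multiset ℕ) : Multiset ℕ :=
  t.bind fun p => Multiset.replicate (ordProj[2] p) (ordCompl[2] p)

lemma factorization_two_pow_mul {j m : ℕ} (hm : Odd m) :
    (2 ^ j * m).factorization 2 = j := by
  have hm0 : m ≠ 0 := by rintro rfl; simp at hm
  have h2m : ¬ (2 ∣ m) := by rw [← even_iff_two_dvd]; exact (Nat.not_even_iff_odd).mpr hm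
  rw [Nat.factorization_mul (pow_ne_zero _ two_ne_zero) hm0]
  simp [Nat.Prime.factorization_pow, Nat.factorization_eq_zero_of_not_dvd h2m, Nat.Prime.factorization Nat.prime_two]

lemma ordCompl_two_pow_mul {j m : ℕ} (hm : Odd m) :
    ordCompl[2] (2 ^ j * m) = m := by
  rw [factorization_two_pow_mul hm, Nat.mul_div_cancel_left _ (by positivity)]

lemma testBit_sum_two_pow (J : Finset ℕ) (j : ℕ) :
    (∑ i ∈ J, 2 ^ i).testBit j ↔ j ∈ J := by
  have hsum : ((J.sort (· ≤ ·)).map fun i => 2 ^ i).sum = ∑ i ∈ J, 2 ^ i := by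
    rw [Finset.sum]
    rw [← Finset.sort_eq J (· ≤ ·), Multiset.map_coe, Multiset.sum_coe]
  rw [testBit_iff_mem_bitIndices, ← hsum,
    Nat.bitIndices_twoPowsum (J.sortedLT_sort), Finset.mem_sort]

lemma odd_of_mem_invParts {t : Multiset ℕ} (hpos : ∀ p ∈ t, 0 < p)
    {q : ℕ} (hq : q ∈ invParts t) : Odd q := by
  rw [invParts, Multiset.mem_bind] at hq
  obtain ⟨p, hp, hmem⟩ := hq
  have hp0 : p ≠ 0 := (hpos p hp).ne'
  rw [Multiset.eq_of_mem_replicate hmem]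
  have h := Nat.not_dvd_ordCompl Nat.prime_two hp0
  rw [Nat.odd_iff]
  omega

lemma pos_of_mem_invParts {t : Multiset ℕ} (hpos : ∀ p ∈ t, 0 < p)
    {q : ℕ} (hq : q ∈ invParts t) : 0 < q := by
  have h := odd_of_mem_invParts hpos hq
  rcases h with ⟨k, rfl⟩; omega

lemma sum_invParts (t : Multiset ℕ) : (invParts t).sum = t.sum := by
  rw [invParts, Multiset.sum_bind]
  have : ∀ p : ℕ, (Multiset.replicate (ordProj[2] p) (ordCompl[2] p)).sum = p := by
    intro p
    rw [Multiset.sum_replicate, smul_eq_mul, Nat.ordProj_mul_ordCompl_eq_self]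
  calc (t.map fun p => (Multiset.replicate (ordProj[2] p) (ordCompl[2] p)).sum).sum
      = (t.map id).sum := by
        congr 1; exact Multiset.map_congr rfl fun p _ => this p
    _ = t.sum := by rw [Multiset.map_id]

lemma count_invParts_testBit {t : Multiset ℕ} (ht : t.Nodup) (hpos : ∀ p ∈ t, 0 < p)
    {m : ℕ} (hm : Odd m) (j : ℕ) :
    ((invParts t).count m).testBit j ↔ 2 ^ j * m ∈ t := by
  classical
  set F : Finset ℕ := ⟨t, ht⟩ with hF
  have hmemF : ∀ p, p ∈ F ↔ p ∈ t := fun p => Iff.rfl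
  set J : Finset ℕ := (F.filter fun p => ordCompl[2] p = m).image fun p => p.factorization 2
    with hJ
  have hcount : (invParts t).count m = ∑ i ∈ J, 2 ^ i := by
    rw [invParts, Multiset.count_bind]
    have h1 : (t.map fun p => (Multiset.replicate (ordProj[2] p) (ordCompl[2] p)).count m).sum
        = ∑ p ∈ F, (if ordCompl[2] p = m then ordProj[2] p else 0) := by
      rw [Finset.sum]
      congr 1
      refine Multiset.map_congr rfl fun p _ => ?_
      rw [Multiset.count_replicate]
    rw [h1, ← Finset.sum_filter]
    rw [hJ]
    rw [Finset.sum_image ?hinj]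
    case hinj =>
      intro p hp q hq hpq
      rw [Finset.mem_coe, Finset.mem_filter] at hp hq
      have hp' : p = 2 ^ p.factorization 2 * m := by
        rw [← hp.2, Nat.ordProj_mul_ordCompl_eq_self]
      have hq' : q = 2 ^ q.factorization 2 * m := by
        rw [← hq.2, Nat.ordProj_mul_ordCompl_eq_self]
      rw [hp', hq', show p.factorization 2 = q.factorization 2 from hpq]
  rw [hcount, testBit_sum_two_pow, hJ, Finset.mem_image]
  constructor
  · rintro ⟨p, hp, rfl⟩
    rw [Finset.mem_filter] at hp
    have hp' : p = 2 ^ p.factorization 2 * m := by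
      rw [← hp.2, Nat.ordProj_mul_ordCompl_eq_self]
    rw [← hp']
    exact hp.1
  · intro hmem
    refine ⟨2 ^ j * m, ?_, factorization_two_pow_mul hm⟩
    rw [Finset.mem_filter]
    exact ⟨hmem, ordCompl_two_pow_mul hm⟩

end GlaisherAux

open GlaisherAux in
theorem glaisher_bijection (n : ℕ) (hn : 0 < n) :
    (∀ P ∈ Nat.Partition.odds n,
        (glaisherParts P.parts).sum = n ∧
        (glaisherParts P.parts).Nodup ∧
        (∀ p ∈ glaisherParts P.parts, 0 < p) ∧
        Multiset.card (glaisherParts P.parts) ≤ Multiset.card P.parts) ∧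
      (∀ P ∈ Nat.Partition.odds n, ∃ Q ∈ Nat.Partition.distincts n,
        Q.parts = glaisherParts P.parts) ∧
      (∀ Q ∈ Nat.Partition.distincts n, ∃! P, P ∈ Nat.Partition.odds n ∧
        glaisherParts P.parts = Q.parts) := by
  classical
  have hodd : ∀ P : Nat.Partition n, P ∈ Nat.Partition.odds n → ∀ x ∈ P.parts, Odd x := by
    intro P hP x hx
    rw [Nat.Partition.odds, Nat.Partition.restricted, Finset.mem_filter] at hP
    exact Nat.not_even_iff_odd.mp (hP.2 x hx)
  refine ⟨?_, ?_, ?_⟩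
  · intro P hP
    have hs := hodd P hP
    exact ⟨by rw [sum_glaisherParts, P.parts_sum], nodup_glaisherParts hs,
      fun p hp => pos_of_mem_glaisherParts (fun x hx => P.parts_pos hx) hp,
      card_glaisherParts_le _⟩
  · intro P hP
    have hs := hodd P hP
    refine ⟨⟨glaisherParts P.parts,
      fun {i} hi => pos_of_mem_glaisherParts (fun x hx => P.parts_pos hx) hi,
      by rw [sum_glaisherParts, P.parts_sum]⟩, ?_, rfl⟩
    rw [Nat.Partition.distincts, Finset.mem_filter]
    exact ⟨Finset.mem_univ _, nodup_glaisherParts hs⟩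
  · intro Q hQ
    rw [Nat.Partition.distincts, Finset.mem_filter] at hQ
    have hQnodup := hQ.2
    have hQpos : ∀ p ∈ Q.parts, 0 < p := fun p hp => Q.parts_pos hp
    set P : Nat.Partition n := ⟨invParts Q.parts,
      fun {i} hi => pos_of_mem_invParts hQpos hi,
      by rw [sum_invParts, Q.parts_sum]⟩ with hPdef
    have hPpartsodd : ∀ x ∈ P.parts, Odd x := fun x hx => odd_of_mem_invParts hQpos hx
    have hPodds : P ∈ Nat.Partition.odds n := by
      rw [Nat.Partition.odds, Nat.Partition.restricted, Finset.mem_filter]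
      exact ⟨Finset.mem_univ _,
        fun i hi => Nat.not_even_iff_odd.mpr (hPpartsodd i hi)⟩
    have hPparts : P.parts = invParts Q.parts := rfl
    have hkey : glaisherParts P.parts = Q.parts := by
      rw [Multiset.Nodup.ext (nodup_glaisherParts hPpartsodd) hQnodup]
      intro q
      constructor
      · intro hq
        have hq0 : 0 < q :=
          pos_of_mem_glaisherParts (fun x hx => pos_of_mem_invParts hQpos hx) hq
        have hmodd : Odd (ordCompl[2] q) := by
          have h := Nat.not_dvd_ordCompl Nat.prime_two hq0.ne'
          rw [Nat.odd_iff]; omega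
        have hdq : 2 ^ (q.factorization 2) * (ordCompl[2] q) = q :=
          Nat.ordProj_mul_ordCompl_eq_self q 2
        rw [← hdq] at hq ⊢
        rw [mem_glaisherParts hPpartsodd hmodd, hPparts] at hq
        exact (count_invParts_testBit hQnodup hQpos hmodd _).mp hq
      · intro hq
        have hq0 : 0 < q := hQpos q hq
        have hmodd : Odd (ordCompl[2] q) := by
          have h := Nat.not_dvd_ordCompl Nat.prime_two hq0.ne'
          rw [Nat.odd_iff]; omega
        have hdq : 2 ^ (q.factorization 2) * (ordCompl[2] q) = q :=
          Nat.ordProj_mul_ordCompl_eq_self q 2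
        rw [← hdq] at hq ⊢
        rw [mem_glaisherParts hPpartsodd hmodd, hPparts]
        exact (count_invParts_testBit hQnodup hQpos hmodd _).mpr hq
    refine ⟨P, ⟨hPodds, hkey⟩, ?_⟩
    rintro P' ⟨hP'odds, hP'eq⟩
    have hP's := hodd P' hP'odds
    refine Nat.Partition.ext ?_
    rw [Multiset.ext]
    intro q
    by_cases hq : Odd q
    · refine Nat.eq_of_testBit_eq fun j => ?_
      have h1 : (P'.parts.count q).testBit j ↔ 2 ^ j * q ∈ Q.parts := by
        rw [← hP'eq]; exact (mem_glaisherParts hP's hq).symm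
      have h2 : (P.parts.count q).testBit j ↔ 2 ^ j * q ∈ Q.parts := by
        rw [hPparts]; exact count_invParts_testBit hQnodup hQpos hq j
      rw [Bool.eq_iff_iff]
      exact h1.trans h2.symm
    · rw [Multiset.count_eq_zero.mpr (fun h => hq (hP's q h)),
        Multiset.count_eq_zero.mpr (fun h => hq (hPpartsodd q h))]
end

section
/- Let λ be a partition of n in which exactly one part value 2^k·m (k ≥ 0, m odd) is repeated, with multiplicity f ≥ 2, and all other parts are distinct. Apply Glaisher-type merging of equal parts repeatedly to obtain a distinct-part partition μ. Order the parts of μ of the form 2^r·m with r ≥ k increasingly as ν_1 < ν_2 < ⋯, set ν_0 = 0, and let h be the positive integer with Σ_{i<h} ν_i < f·2^k·m ≤ Σ_{i≤h} ν_i. Then with N_h = (Σ_{i<h} ν_i)/(2^k·m), the number f − N_h is even and satisfies 0 < f − N_h ≤ 2^{r_h − k}, where ν_h = 2^{r_h}·m. -/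
open Finset

private lemma merge_aux_ordCompl_pow_mul {m : ℕ} (hm : Odd m) (t : ℕ) :
    ordCompl[2] (2 ^ t * m) = m := by
  have h2 : ¬ (2 ∣ m) := by
    intro hd
    rw [Nat.odd_iff] at hm
    omega
  have hm0 : m ≠ 0 := by rintro rfl; simp at h2
  rw [Nat.ordCompl_mul]
  have h1 : ordCompl[2] (2 ^ t) = 1 := by
    have hfac : (2 ^ t).factorization 2 = t := by
      simp [Nat.Prime.factorization_pow Nat.prime_two]
    rw [hfac, Nat.div_self (pow_pos two_pos t)]
  have h2' : ordCompl[2] m = m := by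
    rw [Nat.factorization_eq_zero_of_not_dvd h2]
    simp
  rw [h1, h2', one_mul]

private lemma merge_aux_eq_pow_mul {m p : ℕ} (h : ordCompl[2] p = m) :
    p = 2 ^ p.factorization 2 * m := by
  conv_lhs => rw [← Nat.ordProj_mul_ordCompl_eq_self p 2]
  rw [h]

private lemma merge_aux_sum_lt {k m : ℕ} (hm : 0 < m) {s : Multiset ℕ} (hs : s.Nodup)
    (h : ∀ p ∈ s, ∃ t, t < k ∧ p = 2 ^ t * m) : s.sum < 2 ^ k * m := by
  have key : ∀ j : ℕ, ((Multiset.range j).map (fun t => 2 ^ t * m)).sum = (2 ^ j - 1) * m := by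
    intro j
    induction j with
    | zero => simp
    | succ j ih =>
      rw [Multiset.range_succ, Multiset.map_cons, Multiset.sum_cons, ih]
      have h1 : 1 ≤ 2 ^ j := Nat.one_le_two_pow
      rw [Nat.sub_mul, Nat.sub_mul, one_mul, pow_succ, mul_comm (2 ^ j) 2, two_mul, add_mul]
      have h2 : m ≤ 2 ^ j * m := Nat.le_mul_of_pos_left m (by positivity)
      omega
  have hsub : s ⊆ (Multiset.range k).map (fun t => 2 ^ t * m) := by
    intro p hp
    obtain ⟨t, ht, rfl⟩ := h p hp
    exact Multiset.mem_map.2 ⟨t, Multiset.mem_range.2 ht, rfl⟩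
  have hle : s ≤ (Multiset.range k).map (fun t => 2 ^ t * m) :=
    (Multiset.le_iff_subset hs).2 hsub
  obtain ⟨u, hu⟩ := Multiset.le_iff_exists_add.1 hle
  have hsum : s.sum ≤ (2 ^ k - 1) * m := by
    have := key k
    rw [hu, Multiset.sum_add] at this
    omega
  have h1 : 1 ≤ 2 ^ k := Nat.one_le_two_pow
  have h2 : m ≤ 2 ^ k * m := Nat.le_mul_of_pos_left m (by positivity)
  rw [Nat.sub_mul, one_mul] at hsum
  omega

theorem merge_parameters (n : ℕ) (L M : n.Partition) (k m f : ℕ)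
    (hm : Odd m) (hf : 2 ≤ f)
    -- exactly one repeated part value `2^k * m`, with multiplicity `f`,
    -- all other part values occurring once
    (hcount : L.parts.count (2 ^ k * m) = f)
    (hothers : ∀ q ∈ L.parts.toFinset, q ≠ 2 ^ k * m → L.parts.count q = 1)
    -- `M` is the distinct-part partition obtained by repeatedly merging equal
    -- parts of `L`: it has distinct parts and, for every odd `m'`, the total
    -- size of parts with largest odd divisor `m'` is preserved
    (hM : M ∈ Nat.Partition.distincts n)
    (hmerge : ∀ m' : ℕ, Odd m' →
      ((M.parts.filter (fun p => ordCompl[2] p = m')).sum =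
        (L.parts.filter (fun p => ordCompl[2] p = m')).sum))
    -- `l` lists the parts of `M` of the form `2^r * m` with `r ≥ k`,
    -- increasingly: `ν_1 < ν_2 < ⋯` (so `ν_i = l.getD (i-1) 0`)
    (l : List ℕ)
    (hl : l = Multiset.sort
      (M.parts.filter (fun p => ordCompl[2] p = m ∧ 2 ^ k * m ≤ p)) (· ≤ ·))
    -- `h` is the positive integer with `Σ_{i<h} ν_i < f·2^k·m ≤ Σ_{i≤h} ν_i`
    (h : ℕ) (hh1 : 1 ≤ h) (hh2 : h ≤ l.length)
    (hlow : (l.take (h - 1)).sum < f * (2 ^ k * m))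
    (hhigh : f * (2 ^ k * m) ≤ (l.take h).sum) :
    -- with `N_h = (Σ_{i<h} ν_i)/(2^k·m)` and `ν_h = 2^{r_h}·m`:
    -- `f − N_h` is even and `0 < f − N_h ≤ 2^{r_h − k}`
    Even (f - (l.take (h - 1)).sum / (2 ^ k * m)) ∧
      0 < f - (l.take (h - 1)).sum / (2 ^ k * m) ∧
      f - (l.take (h - 1)).sum / (2 ^ k * m) ≤
        2 ^ ((l.getD (h - 1) 0).factorization 2 - k) := by
  have hm0 : 0 < m := hm.pos
  set c := 2 ^ k * m with hc
  have hc0 : 0 < c := by positivity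
  -- basic facts about `l`
  have hlms : (↑l : Multiset ℕ) =
      M.parts.filter (fun p => ordCompl[2] p = m ∧ c ≤ p) := by
    rw [hl]; exact Multiset.sort_eq _ _
  have hMnodup : M.parts.Nodup := by
    have := hM
    rw [Nat.Partition.distincts, Finset.mem_filter] at this
    exact this.2
  have hmemlM : ∀ p ∈ l, p ∈ M.parts ∧ ordCompl[2] p = m ∧ c ≤ p := by
    intro p hp
    have hpm : p ∈ M.parts.filter (fun p => ordCompl[2] p = m ∧ c ≤ p) := by
      rw [← hlms]; exact Multiset.mem_coe.2 hp
    rw [Multiset.mem_filter] at hpm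
    exact ⟨hpm.1, hpm.2⟩
  have hlnodup : l.Nodup := by
    have : (↑l : Multiset ℕ).Nodup := by
      rw [hlms]; exact hMnodup.filter _
    exact Multiset.coe_nodup.1 this
  have hlsorted : l.Pairwise (· ≤ ·) := by rw [hl]; exact Multiset.pairwise_sort _ _
  -- structure of elements of `l`
  have hkey : ∀ p ∈ l, k ≤ p.factorization 2 ∧ p = 2 ^ (p.factorization 2 - k) * c := by
    intro p hp
    obtain ⟨-, ho, hle⟩ := hmemlM p hp
    have hps := merge_aux_eq_pow_mul ho
    set v := p.factorization 2 with hv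
    have hkv : k ≤ v := by
      by_contra hlt
      push_neg at hlt
      have hlt2 : 2 ^ v * m < 2 ^ k * m :=
        (Nat.mul_lt_mul_right hm0).2 (Nat.pow_lt_pow_right one_lt_two hlt)
      rw [← hps, ← hc] at hlt2
      exact absurd hle (not_le.2 hlt2)
    refine ⟨hkv, ?_⟩
    rw [hc, ← mul_assoc, ← pow_add, Nat.sub_add_cancel hkv]
    exact hps
  have hdvdmem : ∀ p ∈ l, c ∣ p := by
    intro p hp
    exact ⟨2 ^ (p.factorization 2 - k), by rw [mul_comm]; exact (hkey p hp).2⟩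
  -- strict bound on elements of the "drop" part
  have hdropgt : ∀ p ∈ l.drop (h - 1), c < p := by
    intro p hp
    have hpl : p ∈ l := List.mem_of_mem_drop hp
    have hcp : c ≤ p := (hmemlM p hpl).2.2
    rcases lt_or_eq_of_le hcp with h' | h'
    · exact h'
    · exfalso
      rcases Nat.lt_or_ge h 2 with hsm | hbg
      · -- h = 1
        obtain rfl : h = 1 := by omega
        simp only [Nat.sub_self, List.drop_zero] at hp
        obtain ⟨a, t, rfl⟩ : ∃ a t, l = a :: t := by
          cases l with
          | nil => simp at hh2
          | cons a t => exact ⟨a, t, rfl⟩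
        have hap : a ≤ p := by
          rcases List.mem_cons.1 hp with rfl | hmem
          · exact le_rfl
          · exact (List.pairwise_cons.1 hlsorted).1 p hmem
        have htake : ((a :: t).take 1).sum = a := by simp
        rw [htake] at hhigh
        have h2c : 2 * c ≤ f * c := Nat.mul_le_mul_right c hf
        have : 2 * c ≤ a := le_trans h2c hhigh
        omega
      · -- h ≥ 2
        have hlen : 0 < (l.take (h - 1)).length := by
          rw [List.length_take]; omega
        obtain ⟨x, hx⟩ := List.exists_mem_of_length_pos hlen
        have hxl : x ∈ l := List.mem_of_mem_take hx
        have hxp : x ≤ p := by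
          have hs2 : List.Pairwise (· ≤ ·) (l.take (h - 1) ++ l.drop (h - 1)) := by
            rw [List.take_append_drop]; exact hlsorted
          exact (List.pairwise_append.1 hs2).2.2 x hx p hp
        have hpx : p ≤ x := h' ▸ (hmemlM x hxl).2.2
        have hxeq : x = p := le_antisymm hxp hpx
        have hnd : (l.take (h - 1) ++ l.drop (h - 1)).Nodup := by
          rw [List.take_append_drop]; exact hlnodup
        exact (List.nodup_append.1 hnd).2.2 x hx p hp hxeq
  -- N
  have hdvdA : c ∣ (l.take (h - 1)).sum :=
    List.dvd_sum fun p hp => hdvdmem p (List.mem_of_mem_take hp)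
  set N := (l.take (h - 1)).sum / c with hNdef
  have hNc : N * c = (l.take (h - 1)).sum := Nat.div_mul_cancel hdvdA
  -- N < f
  have hNf : N < f := by
    have hNcf : N * c < f * c := by rw [hNc]; exact hlow
    exact lt_of_mul_lt_mul_right hNcf (Nat.zero_le c)
  -- the h-th element
  have hidx : h - 1 < l.length := by omega
  have hp0mem : l.getD (h - 1) 0 ∈ l := by
    rw [List.getD_eq_getElem l 0 hidx]
    exact List.getElem_mem hidx
  obtain ⟨hkv0, hp0eq⟩ := hkey _ hp0mem
  have hsum_h : (l.take h).sum = (l.take (h - 1)).sum + l.getD (h - 1) 0 := by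
    have hh : h - 1 + 1 = h := by omega
    have hss := List.sum_take_succ l (h - 1) hidx
    rw [hh] at hss
    rw [hss, List.getD_eq_getElem l 0 hidx]
  -- f ≤ N + 2^(v-k)
  have hfle : f ≤ N + 2 ^ ((l.getD (h - 1) 0).factorization 2 - k) := by
    have hstep : (l.take h).sum = (N + 2 ^ ((l.getD (h - 1) 0).factorization 2 - k)) * c := by
      rw [hsum_h, ← hNc, add_mul, ← hp0eq]
    have hmul : f * c ≤ (N + 2 ^ ((l.getD (h - 1) 0).factorization 2 - k)) * c := by
      rw [← hstep]; exact hhigh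
    exact Nat.le_of_mul_le_mul_right hmul hc0
  -- parity argument: M side
  have hS : (M.parts.filter (fun p => ordCompl[2] p = m)).sum =
      (L.parts.filter (fun p => ordCompl[2] p = m)).sum := hmerge m hm
  have hMfil2 : M.parts.filter (fun a => c ≤ a ∧ ordCompl[2] a = m) = (↑l : Multiset ℕ) := by
    rw [hlms]
    exact Multiset.filter_congr fun x _ => and_comm
  have hMsplit : (M.parts.filter (fun p => ordCompl[2] p = m)).sum =
      l.sum + (M.parts.filter (fun p => ¬ c ≤ p ∧ ordCompl[2] p = m)).sum := by
    conv_lhs => rw [← Multiset.filter_add_not (fun p => c ≤ p)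
      (M.parts.filter (fun p => ordCompl[2] p = m))]
    rw [Multiset.filter_filter, Multiset.filter_filter, Multiset.sum_add, hMfil2,
      Multiset.sum_coe]
  have hlowM : (M.parts.filter (fun p => ¬ c ≤ p ∧ ordCompl[2] p = m)).sum < c := by
    rw [hc]
    apply merge_aux_sum_lt hm0 (hMnodup.filter _)
    intro p hp
    rw [Multiset.mem_filter] at hp
    obtain ⟨hp0, hp2, hp1⟩ := hp
    have hps := merge_aux_eq_pow_mul hp1
    refine ⟨p.factorization 2, ?_, hps⟩
    by_contra hge
    push_neg at hge
    have hge2 : 2 ^ k * m ≤ 2 ^ p.factorization 2 * m :=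
      Nat.mul_le_mul_right m (Nat.pow_le_pow_right (by norm_num) hge)
    rw [← hps, ← hc] at hge2
    exact hp2 hge2
  -- parity argument: L side
  have hLsplit : (L.parts.filter (fun p => ordCompl[2] p = m)).sum =
      (L.parts.filter (fun p => c ≤ p ∧ ordCompl[2] p = m)).sum +
      (L.parts.filter (fun p => ¬ c ≤ p ∧ ordCompl[2] p = m)).sum := by
    conv_lhs => rw [← Multiset.filter_add_not (fun p => c ≤ p)
      (L.parts.filter (fun p => ordCompl[2] p = m))]
    rw [Multiset.filter_filter, Multiset.filter_filter, Multiset.sum_add]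
  have hGsplit : (L.parts.filter (fun p => c ≤ p ∧ ordCompl[2] p = m)).sum =
      (L.parts.filter (fun p => c < p ∧ (c ≤ p ∧ ordCompl[2] p = m))).sum +
      (L.parts.filter (fun p => ¬ c < p ∧ (c ≤ p ∧ ordCompl[2] p = m))).sum := by
    conv_lhs => rw [← Multiset.filter_add_not (fun p => c < p)
      (L.parts.filter (fun p => c ≤ p ∧ ordCompl[2] p = m))]
    rw [Multiset.filter_filter, Multiset.filter_filter, Multiset.sum_add]
  have hPc : ordCompl[2] c = m := by rw [hc]; exact merge_aux_ordCompl_pow_mul hm k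
  have hGeq : L.parts.filter (fun p => ¬ c < p ∧ (c ≤ p ∧ ordCompl[2] p = m)) =
      L.parts.filter (fun p => p = c) := by
    apply Multiset.filter_congr
    intro p _
    constructor
    · rintro ⟨h2, h1, -⟩; omega
    · rintro rfl; exact ⟨lt_irrefl c, le_rfl, hPc⟩
  have hEQsum : (L.parts.filter (fun p => p = c)).sum = f * c := by
    have hfe : L.parts.filter (fun p => p = c)
        = Multiset.replicate (Multiset.count c L.parts) c := Multiset.filter_eq' L.parts c
    rw [hfe, Multiset.sum_replicate, smul_eq_mul, hcount]
  have hHIdvd : 2 * c ∣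
      (L.parts.filter (fun p => c < p ∧ (c ≤ p ∧ ordCompl[2] p = m))).sum := by
    apply Multiset.dvd_sum
    intro p hp
    rw [Multiset.mem_filter] at hp
    obtain ⟨hp0, hp2, -, hp1⟩ := hp
    have hps := merge_aux_eq_pow_mul hp1
    have hkv : k + 1 ≤ p.factorization 2 := by
      by_contra hge
      push_neg at hge
      have hle2 : 2 ^ p.factorization 2 * m ≤ 2 ^ k * m :=
        Nat.mul_le_mul_right m (Nat.pow_le_pow_right (by norm_num) (by omega))
      rw [← hps, ← hc] at hle2
      omega
    have h2c : 2 * c = 2 ^ (k + 1) * m := by rw [hc]; ring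
    rw [h2c, hps]
    exact Nat.mul_dvd_mul_right (pow_dvd_pow 2 hkv) m
  have hlowL : (L.parts.filter (fun p => ¬ c ≤ p ∧ ordCompl[2] p = m)).sum < c := by
    rw [hc]
    apply merge_aux_sum_lt hm0
    · rw [Multiset.nodup_iff_count_le_one]
      intro p
      by_cases hp : p ∈ L.parts.filter (fun p => ¬ c ≤ p ∧ ordCompl[2] p = m)
      · rw [Multiset.mem_filter] at hp
        obtain ⟨hp0, hp2, hp1⟩ := hp
        have hcnt : L.parts.count p = 1 := by
          apply hothers p (Multiset.mem_toFinset.2 hp0)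
          intro hpe
          exact hp2 (hpe ▸ le_rfl)
        calc Multiset.count p (L.parts.filter (fun p => ¬ c ≤ p ∧ ordCompl[2] p = m))
            ≤ Multiset.count p L.parts := Multiset.count_le_of_le p (Multiset.filter_le _ _)
          _ = 1 := hcnt
      · rw [Multiset.count_eq_zero.2 hp]; omega
    · intro p hp
      rw [Multiset.mem_filter] at hp
      obtain ⟨hp0, hp2, hp1⟩ := hp
      have hps := merge_aux_eq_pow_mul hp1
      refine ⟨p.factorization 2, ?_, hps⟩
      by_contra hge
      push_neg at hge
      have hge2 : 2 ^ k * m ≤ 2 ^ p.factorization 2 * m :=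
        Nat.mul_le_mul_right m (Nat.pow_le_pow_right (by norm_num) hge)
      rw [← hps, ← hc] at hge2
      exact hp2 hge2
  -- combine
  obtain ⟨b, hb⟩ := hHIdvd
  have hdropdvd : 2 * c ∣ (l.drop (h - 1)).sum := by
    apply List.dvd_sum
    intro p hp
    have hpl : p ∈ l := List.mem_of_mem_drop hp
    obtain ⟨hkv, hps⟩ := hkey p hpl
    have hcp : c < p := hdropgt p hp
    have hne : p.factorization 2 - k ≠ 0 := by
      intro h0
      rw [h0, pow_zero, one_mul] at hps
      omega
    obtain ⟨j, hj⟩ : ∃ j, p.factorization 2 - k = j + 1 :=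
      ⟨p.factorization 2 - k - 1, by omega⟩
    refine ⟨2 ^ j, ?_⟩
    rw [hps, hj, pow_succ]
    ring
  obtain ⟨d, hd⟩ := hdropdvd
  have htd : N * c + 2 * c * d = l.sum := by
    rw [hNc, ← hd]
    exact List.sum_take_add_sum_drop l (h - 1)
  have hmain : l.sum + (M.parts.filter (fun p => ¬ c ≤ p ∧ ordCompl[2] p = m)).sum =
      f * c + 2 * c * b + (L.parts.filter (fun p => ¬ c ≤ p ∧ ordCompl[2] p = m)).sum := by
    rw [← hMsplit, hS, hLsplit, hGsplit, hGeq, hEQsum, ← hb]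
    ring
  have hlowEq : (M.parts.filter (fun p => ¬ c ≤ p ∧ ordCompl[2] p = m)).sum =
      (L.parts.filter (fun p => ¬ c ≤ p ∧ ordCompl[2] p = m)).sum := by
    have h1 : (l.sum + (M.parts.filter (fun p => ¬ c ≤ p ∧ ordCompl[2] p = m)).sum) % c
        = (M.parts.filter (fun p => ¬ c ≤ p ∧ ordCompl[2] p = m)).sum := by
      rw [← htd]
      have hrq : N * c + 2 * c * d +
          (M.parts.filter (fun p => ¬ c ≤ p ∧ ordCompl[2] p = m)).sum
          = c * (N + 2 * d) + (M.parts.filter (fun p => ¬ c ≤ p ∧ ordCompl[2] p = m)).sum := by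
        ring
      rw [hrq, Nat.mul_add_mod, Nat.mod_eq_of_lt hlowM]
    have h2 : (f * c + 2 * c * b +
        (L.parts.filter (fun p => ¬ c ≤ p ∧ ordCompl[2] p = m)).sum) % c
        = (L.parts.filter (fun p => ¬ c ≤ p ∧ ordCompl[2] p = m)).sum := by
      have hrq : f * c + 2 * c * b +
          (L.parts.filter (fun p => ¬ c ≤ p ∧ ordCompl[2] p = m)).sum
          = c * (f + 2 * b) + (L.parts.filter (fun p => ¬ c ≤ p ∧ ordCompl[2] p = m)).sum := by
        ring
      rw [hrq, Nat.mul_add_mod, Nat.mod_eq_of_lt hlowL]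
    rw [← h1, ← h2, hmain]
  have hls : l.sum = f * c + 2 * c * b := by
    rw [hlowEq] at hmain
    exact Nat.add_right_cancel hmain
  have hfinal : N + 2 * d = f + 2 * b := by
    have hcc : (N + 2 * d) * c = (f + 2 * b) * c := by
      calc (N + 2 * d) * c = N * c + 2 * c * d := by ring
        _ = f * c + 2 * c * b := by rw [htd, hls]
        _ = (f + 2 * b) * c := by ring
    exact Nat.eq_of_mul_eq_mul_right hc0 hcc
  refine ⟨?_, Nat.sub_pos_of_lt hNf, ?_⟩
  · rw [Nat.even_sub hNf.le, Nat.even_iff, Nat.even_iff]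
    omega
  · exact Nat.sub_le_iff_le_add.2 (le_of_le_of_eq hfle (add_comm _ _))
end
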